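/- arXiv:1501.01030 — 5 statements merged into one kernel-verified Lean document; each statement's English description precedes it below -/
import Mathlib

section
/- Let F be a field and n ≥ 1, and assume that every irreducible polynomial in F[x] has degree strictly less than n. Then every matrix A ∈ M_n(F) commutes with some nonzero nilpotent matrix in M_n(F) or with some nontrivial idempotent matrix in M_n(F). -/
open Polynomial
set_option maxHeartbeats 1000000

theorem aux_nonsquarefree (F : Type*) [Field F] (n : ℕ) (hn : 1 ≤ n)
    (A : Matrix (Fin n) (Fin n) F) (hsq : ¬ Squarefree (minpoly F A)) :
    ∃ N : Matrix (Fin n) (Fin n) F, N ≠ 0 ∧ IsNilpotent N ∧ A * N = N * A := by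
  haveI : Nonempty (Fin n) := ⟨⟨0, hn⟩⟩
  have h1 : IsIntegral F A := Algebra.IsIntegral.isIntegral A
  have h4 : minpoly F A ≠ 0 := minpoly.ne_zero h1
  have hcomm : ∀ q : F[X], A * aeval A q = aeval A q * A := fun q => by
    calc A * aeval A q = aeval A (X * q) := by rw [map_mul, aeval_X]
      _ = aeval A (q * X) := by rw [mul_comm]
      _ = aeval A q * A := by rw [map_mul, aeval_X]
  simp only [Squarefree, not_forall] at hsq
  obtain ⟨x, hdvd, hx⟩ := hsq
  obtain ⟨r, hr⟩ := hdvd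
  have hx0 : x ≠ 0 := by rintro rfl; simp at hr; exact h4 hr
  have hr0 : r ≠ 0 := by rintro rfl; simp at hr; exact h4 hr
  have hdx : 0 < x.natDegree := by
    rcases Nat.eq_zero_or_pos x.natDegree with h | h
    · obtain ⟨c, rfl⟩ := Polynomial.natDegree_eq_zero.mp h
      exact absurd (isUnit_C.mpr (IsUnit.mk0 c (by simpa using hx0))) hx
    · exact h
  refine ⟨aeval A (x * r), ?_, ⟨2, ?_⟩, hcomm _⟩
  · intro h0
    have hle := minpoly.degree_le_of_ne_zero F A (mul_ne_zero hx0 hr0) h0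
    have hle' := natDegree_le_natDegree hle
    rw [hr, natDegree_mul (mul_ne_zero hx0 hx0) hr0, natDegree_mul hx0 hx0,
      natDegree_mul hx0 hr0] at hle'
    omega
  · rw [← map_pow]
    have h2 : (x * r) ^ 2 = minpoly F A * r := by rw [hr]; ring
    rw [h2, map_mul, minpoly.aeval, zero_mul]

theorem aux_reducible (F : Type*) [Field F] (n : ℕ) (hn : 1 ≤ n)
    (A : Matrix (Fin n) (Fin n) F) (hsq : Squarefree (minpoly F A))
    (hni : ¬ Irreducible (minpoly F A)) :
    ∃ E : Matrix (Fin n) (Fin n) F, E * E = E ∧ E ≠ 0 ∧ E ≠ 1 ∧ A * E = E * A := by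
  haveI : Nonempty (Fin n) := ⟨⟨0, hn⟩⟩
  have h1 : IsIntegral F A := Algebra.IsIntegral.isIntegral A
  have h4 : minpoly F A ≠ 0 := minpoly.ne_zero h1
  have hnu : ¬ IsUnit (minpoly F A) := by
    intro h
    have := minpoly.natDegree_pos h1
    rw [Polynomial.isUnit_iff_degree_eq_zero] at h
    rw [natDegree_pos_iff_degree_pos, h] at this
    exact lt_irrefl _ this
  have hcomm : ∀ q : F[X], A * aeval A q = aeval A q * A := fun q => by
    calc A * aeval A q = aeval A (X * q) := by rw [map_mul, aeval_X]
      _ = aeval A (q * X) := by rw [mul_comm]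
      _ = aeval A q * A := by rw [map_mul, aeval_X]
  obtain ⟨p, hp, hpd⟩ := WfDvdMonoid.exists_irreducible_factor hnu h4
  obtain ⟨q, hq⟩ := hpd
  have hqnu : ¬ IsUnit q := by
    intro h
    have ha : Associated p (minpoly F A) := hq ▸ associated_mul_unit_right p q h
    exact hni (ha.irreducible hp)
  have hpq : ¬ p ∣ q := by
    intro ⟨s, hs⟩
    exact hp.not_isUnit (hsq p (⟨s, by rw [hq, hs]; ring⟩))
  have hcop : IsCoprime p q := (hp.isCoprime_or_dvd q).resolve_right hpq
  obtain ⟨u, v, huv⟩ := hcop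
  refine ⟨aeval A (u * p), ?_, ?_, ?_, hcomm _⟩
  · have key : u * p * (u * p) = u * p - u * v * minpoly F A := by
      rw [hq]; linear_combination (u*p) * huv
    calc aeval A (u*p) * aeval A (u*p) = aeval A (u*p*(u*p)) := (map_mul _ _ _).symm
      _ = aeval A (u*p) - aeval A (u*v) * aeval A (minpoly F A) := by
          simp only [key, map_sub, map_mul]
      _ = aeval A (u*p) := by rw [minpoly.aeval, mul_zero, sub_zero]
  · intro h0
    have hd : minpoly F A ∣ u * p := minpoly.dvd F A h0
    obtain ⟨w, hw⟩ := hd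
    -- q ∣ u*p : from m = p*q ∣ u*p ... derive q unit
    have : IsUnit q := by
      have : q * (w * p + v) = 1 := by
        have h1' : u * p = p * q * w := by rw [← hq, hw]
        linear_combination huv + (-1 : F[X]) * h1'
      exact IsUnit.of_mul_eq_one _ this
    exact hqnu this
  · intro h0
    have hvq : aeval A (v * q) = 0 := by
      have hv : v * q = 1 - u * p := by linear_combination huv
      rw [hv, map_sub, map_one, h0, sub_self]
    have hd : minpoly F A ∣ v * q := minpoly.dvd F A hvq
    obtain ⟨w, hw⟩ := hd
    have : IsUnit p := by
      have : p * (w * q + u) = 1 := by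
        have h1' : v * q = p * q * w := by rw [← hq, hw]
        linear_combination huv + (-1 : F[X]) * h1'
      exact IsUnit.of_mul_eq_one _ this
    exact hp.not_isUnit this

theorem aux_irreducible (F : Type*) [Field F] (n : ℕ) (hn : 1 ≤ n)
    (A : Matrix (Fin n) (Fin n) F) (hi : Irreducible (minpoly F A))
    (hdeg : (minpoly F A).natDegree < n) :
    ∃ E : Matrix (Fin n) (Fin n) F, E * E = E ∧ E ≠ 0 ∧ E ≠ 1 ∧ A * E = E * A := by
  haveI : Nonempty (Fin n) := ⟨⟨0, hn⟩⟩
  have h1 : IsIntegral F A := Algebra.IsIntegral.isIntegral A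
  have h4 : minpoly F A ≠ 0 := minpoly.ne_zero h1
  have hd1 : 0 < (minpoly F A).natDegree := minpoly.natDegree_pos h1
  haveI : Fact (Irreducible (minpoly F A)) := ⟨hi⟩
  set K := AdjoinRoot (minpoly F A) with hK
  set V := (Fin n → F) with hV
  set f : Module.End F V := Matrix.toLinAlgEquiv' A with hf
  have hfm : aeval f (minpoly F A) = 0 := by
    rw [hf, aeval_algEquiv, AlgHom.comp_apply, minpoly.aeval, map_zero]
  have hker : ∀ p ∈ Ideal.span {minpoly F A}, (aeval f).toRingHom p = 0 := by
    intro p hp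
    rw [Ideal.mem_span_singleton] at hp
    obtain ⟨q, rfl⟩ := hp
    simp [map_mul, hfm]
  set φ : K →+* Module.End F V :=
    Ideal.Quotient.lift (Ideal.span {minpoly F A}) (aeval f).toRingHom hker with hφ
  have hφmk : ∀ p : F[X], φ (AdjoinRoot.mk (minpoly F A) p) = aeval f p := fun p =>
    Ideal.Quotient.lift_mk _ _ _
  letI instKV : Module K V := Module.compHom V φ
  have hsmul : ∀ (k : K) (v : V), k • v = φ k v := fun k v => rfl
  have hφ_alg : ∀ c : F, φ (algebraMap F K c) = algebraMap F (Module.End F V) c := by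
    intro c
    rw [AdjoinRoot.algebraMap_eq]
    show φ (AdjoinRoot.mk _ (C c)) = _
    rw [hφmk, aeval_C]
  haveI : IsScalarTower F K V := ⟨fun c k v => by
    rw [hsmul, hsmul, Algebra.smul_def, map_mul, hφ_alg]
    show (algebraMap F (Module.End F V) c * φ k) v = c • φ k v
    rw [Module.End.mul_apply, Module.algebraMap_end_apply]⟩
  haveI : FiniteDimensional F K := PowerBasis.finite (AdjoinRoot.powerBasis h4)
  haveI : FiniteDimensional K V := Module.Finite.of_restrictScalars_finite F K V
  have hKd : Module.finrank F K = (minpoly F A).natDegree := by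
    rw [PowerBasis.finrank (AdjoinRoot.powerBasis h4)]
    rfl
  have hVn : Module.finrank F V = n := Module.finrank_fin_fun F
  have htower : Module.finrank F K * Module.finrank K V = Module.finrank F V :=
    Module.finrank_mul_finrank F K V
  have hr2 : 2 ≤ Module.finrank K V := by
    rw [hKd, hVn] at htower
    rcases Nat.lt_or_ge (Module.finrank K V) 2 with h | h
    · interval_cases hfr : (Module.finrank K V) <;> omega
    · exact h
  set i0 : Fin n := ⟨0, hn⟩ with hi0
  set v0 : V := Pi.single i0 (1 : F) with hv0def
  have hv0 : v0 ≠ 0 := by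
    intro h
    have := congrFun h i0
    simp only [hv0def, Pi.zero_apply] at this
    rw [Pi.single_eq_same] at this
    exact one_ne_zero this
  set W : Submodule K V := K ∙ v0 with hW
  have hWne : W ≠ ⊤ := by
    intro h
    have h1' : Module.finrank K W = 1 := finrank_span_singleton hv0
    rw [h, finrank_top] at h1'
    omega
  obtain ⟨x0, hx0⟩ : ∃ x : V, x ∉ W := by
    by_contra h
    push_neg at h
    exact hWne (Submodule.eq_top_iff'.mpr h)
  obtain ⟨W', hcompl⟩ := Submodule.exists_isCompl W
  set π : V →ₗ[K] V := W.subtype.comp (W.projectionOnto W' hcompl) with hπ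
  have hπW : ∀ w ∈ W, π w = w := fun w hw => by
    simp [hπ, Submodule.projectionOnto_apply_of_mem_left hcompl hw]
  have hπmem : ∀ x : V, π x ∈ W := fun x => (W.linearProjOfIsCompl W' hcompl x).2
  set e' : V →ₗ[F] V := LinearMap.restrictScalars F π with he'
  have hroot : ∀ y : V, f y = (AdjoinRoot.root (minpoly F A)) • y := fun y => by
    rw [hsmul]
    show f y = φ (AdjoinRoot.mk _ X) y
    rw [hφmk, aeval_X]
  have hcommlin : f * e' = e' * f := by
    refine LinearMap.ext fun x => ?_
    show f (e' x) = e' (f x)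
    rw [hroot (e' x), hroot x]
    exact (map_smul π _ x).symm
  refine ⟨LinearMap.toMatrixAlgEquiv' e', ?_, ?_, ?_, ?_⟩
  · rw [← map_mul]
    congr 1
    exact LinearMap.ext fun x => hπW _ (hπmem x)
  · intro h
    rw [← map_zero (LinearMap.toMatrixAlgEquiv' (R := F) (n := Fin n))] at h
    have h3 := (LinearMap.toMatrixAlgEquiv' (R := F) (n := Fin n)).injective h
    have h2 := congrFun (congrArg (fun g : V →ₗ[F] V => (g : V → V)) h3) v0
    simp only [LinearMap.zero_apply] at h2
    have hid : π v0 = v0 := hπW v0 (Submodule.mem_span_singleton_self v0)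
    rw [show e' v0 = π v0 from rfl, hid] at h2
    exact hv0 h2
  · intro h
    rw [← map_one (LinearMap.toMatrixAlgEquiv' (R := F) (n := Fin n))] at h
    have h3 := (LinearMap.toMatrixAlgEquiv' (R := F) (n := Fin n)).injective h
    have h2 := congrFun (congrArg (fun g : V →ₗ[F] V => (g : V → V)) h3) x0
    simp only [Module.End.one_apply] at h2
    exact hx0 (h2 ▸ hπmem x0)
  · have hA : A = LinearMap.toMatrixAlgEquiv' f := by rw [hf]; simp
    rw [hA, ← map_mul, ← map_mul, hcommlin]

/-- If every irreducible polynomial over `F` has degree `< n`, then every `n × n` matrix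
over `F` commutes with a nonzero nilpotent matrix or with a nontrivial idempotent matrix. -/
theorem exists_nilpotent_or_idempotent_commuting
    (F : Type*) [Field F] (n : ℕ) (hn : 1 ≤ n)
    (hirr : ∀ p : Polynomial F, Irreducible p → p.natDegree < n)
    (A : Matrix (Fin n) (Fin n) F) :
    (∃ N : Matrix (Fin n) (Fin n) F, N ≠ 0 ∧ IsNilpotent N ∧ A * N = N * A) ∨
    (∃ E : Matrix (Fin n) (Fin n) F, E * E = E ∧ E ≠ 0 ∧ E ≠ 1 ∧ A * E = E * A) := by
  by_cases hsq : Squarefree (minpoly F A)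
  · by_cases hi : Irreducible (minpoly F A)
    · exact Or.inr (aux_irreducible F n hn A hi (hirr _ hi))
    · exact Or.inr (aux_reducible F n hn A hsq hi)
  · exact Or.inl (aux_nonsquarefree F n hn A hsq)
end

section
/- Let F be a field, n ≥ 2, and let A ∈ M_n(F) be a derogatory matrix, i.e., the degree of the minimal polynomial of A over F is strictly less than n. Then A commutes with some nontrivial idempotent matrix E ∈ M_n(F). -/
open Polynomial Module

/-- If the `F[X]`-module `AEval' f` is cyclic, then the dimension is at most
the degree of the minimal polynomial of `f`. -/
lemma cyclic_aeval_rank_le (F : Type*) [Field F] (n : ℕ)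
    (f : (Fin n → F) →ₗ[F] (Fin n → F))
    (v : Module.AEval' f) (hv : ∀ w : Module.AEval' f, ∃ g : F[X], g • v = w) :
    n ≤ (minpoly F f).natDegree := by
  classical
  have hint : IsIntegral F f := Algebra.IsIntegral.isIntegral f
  set m := minpoly F f with hm
  set d := m.natDegree with hd
  have hmon : m.Monic := minpoly.monic hint
  set vv : Fin n → F := (Module.AEval'.of f).symm v with hvv
  have hspan : (⊤ : Submodule F (Fin n → F)) ≤
      Submodule.span F (Set.range fun i : Fin d => (f ^ (i : ℕ)) vv) := by
    intro w _
    obtain ⟨g, hg⟩ := hv (Module.AEval'.of f w)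
    have hw : w = Polynomial.aeval f g vv := by
      have := congrArg (Module.AEval'.of f).symm hg
      rw [Module.AEval.of_symm_smul] at this
      simpa [hvv] using this.symm
    have hmod : Polynomial.aeval f g = Polynomial.aeval f (g %ₘ m) := by
      conv_lhs => rw [← Polynomial.modByMonic_add_div g m]
      rw [map_add, map_mul, hm, minpoly.aeval, zero_mul, add_zero]
    by_cases hr : g %ₘ m = 0
    · rw [hw, hmod, hr] ; simp
    · have hdeg : (g %ₘ m).natDegree < d := by
        have := Polynomial.degree_modByMonic_lt g hmon
        exact Polynomial.natDegree_lt_natDegree hr this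
      rw [hw, hmod, Polynomial.aeval_eq_sum_range' hdeg]
      rw [LinearMap.coe_sum, Finset.sum_apply]
      refine Submodule.sum_mem _ fun i hi => ?_
      rw [LinearMap.smul_apply]
      refine Submodule.smul_mem _ _ (Submodule.subset_span ?_)
      exact ⟨⟨i, Finset.mem_range.mp hi⟩, rfl⟩
  have h1 : (n : ℕ) = Module.finrank F (⊤ : Submodule F (Fin n → F)) := by
    rw [finrank_top, Module.finrank_fin_fun]
  have h2 : Module.finrank F (⊤ : Submodule F (Fin n → F)) ≤
      Module.finrank F (Submodule.span F (Set.range fun i : Fin d => (f ^ (i : ℕ)) vv)) :=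
    Submodule.finrank_mono hspan
  calc n = _ := h1
    _ ≤ _ := h2
    _ ≤ d := by
        apply le_trans (finrank_span_le_card _)
        rw [Set.toFinset_card]
        exact le_trans (Fintype.card_range_le _) (by simp)

set_option maxHeartbeats 1000000 in
/-- A derogatory matrix (minimal polynomial of degree `< n`) commutes with a nontrivial
idempotent matrix. -/
theorem derogatory_commutes_with_nontrivial_idempotent
    (F : Type*) [Field F] (n : ℕ) (hn : 2 ≤ n)
    (A : Matrix (Fin n) (Fin n) F)
    (hA : (minpoly F A).natDegree < n) :
    ∃ E : Matrix (Fin n) (Fin n) F, E * E = E ∧ E ≠ 0 ∧ E ≠ 1 ∧ A * E = E * A := by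
  classical
  set f : (Fin n → F) →ₗ[F] (Fin n → F) := Matrix.toLin' A with hf
  have hmf : minpoly F f = minpoly F A := Matrix.minpoly_toLin' A
  have hint : IsIntegral F f := Algebra.IsIntegral.isIntegral f
  have hm0 : minpoly F f ≠ 0 := minpoly.ne_zero hint
  have htor : Module.IsTorsion F[X] (Module.AEval' f) := fun x =>
    ⟨⟨minpoly F f, mem_nonZeroDivisors_of_ne_zero hm0⟩, by
      show (minpoly F f : F[X]) • x = 0
      apply (Module.AEval'.of f).symm.injective
      rw [Module.AEval.of_symm_smul]
      simp [minpoly.aeval]⟩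
  obtain ⟨ι, hι, p, hp, e, ⟨e'⟩⟩ := Module.equiv_directSum_of_isTorsion htor
  haveI := hι
  set Q : ι → Type _ := fun i => (F[X] ⧸ (F[X] ∙ p i ^ e i)) with hQ
  -- there are two distinct nontrivial summands
  have key : ∃ i j : ι, i ≠ j ∧ Nontrivial (Q i) ∧ Nontrivial (Q j) := by
    by_contra hcon
    push_neg at hcon
    -- first, exclude the all-subsingleton case
    have hVnt : Nontrivial (Module.AEval' f) := by
      refine ⟨Module.AEval'.of f 0, Module.AEval'.of f (fun _ => 1), fun h => ?_⟩
      have := congrFun ((Module.AEval'.of f).injective h) ⟨0, by omega⟩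
      simp at this
    by_cases hall : ∀ i : ι, ¬ Nontrivial (Q i)
    · haveI : ∀ i, Subsingleton (Q i) := fun i =>
        not_nontrivial_iff_subsingleton.mp (hall i)
      have hsub : ∀ x y : DirectSum ι Q, x = y := fun x y =>
        DFinsupp.ext fun i => Subsingleton.elim _ _
      obtain ⟨a, b, hab⟩ := hVnt
      exact hab (e'.injective (hsub _ _))
    · push_neg at hall
      obtain ⟨i₀, hi₀⟩ := hall
      have hothers : ∀ j, j ≠ i₀ → Subsingleton (Q j) := fun j hj =>
        hcon i₀ j (Ne.symm hj) hi₀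
      -- cyclic
      set v : Module.AEval' f :=
        e'.symm (DirectSum.lof F[X] ι Q i₀ (Submodule.Quotient.mk 1)) with hv
      have hcyc : ∀ w : Module.AEval' f, ∃ g : F[X], g • v = w := by
        intro w
        obtain ⟨g, hg⟩ := Submodule.Quotient.mk_surjective _ ((e' w) i₀)
        refine ⟨g, e'.injective ?_⟩
        rw [map_smul, hv, LinearEquiv.apply_symm_apply]
        refine DFinsupp.ext fun j => ?_
        rcases eq_or_ne j i₀ with rfl | hj
        · rw [← hg]
          show (g • DirectSum.lof F[X] ι Q j (Submodule.Quotient.mk 1)) j = _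
          rw [DFinsupp.smul_apply, DirectSum.lof_apply,
            ← Submodule.Quotient.mk_smul, smul_eq_mul, mul_one]
        · haveI := hothers j hj
          exact Subsingleton.elim _ _
      have := cyclic_aeval_rank_le F n f v hcyc
      rw [hmf] at this
      omega
  obtain ⟨i₀, j₀, hij, hQi, hQj⟩ := key
  -- the projection onto the i₀ summand
  set π : (DirectSum ι Q) →ₗ[F[X]] (DirectSum ι Q) :=
    (DirectSum.lof F[X] ι Q i₀).comp (DirectSum.component F[X] ι Q i₀) with hπ
  have hππ : ∀ x, π (π x) = π x := by
    intro x
    simp [hπ, DirectSum.component.lof_self]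
  set Elin : Module.AEval' f →ₗ[F[X]] Module.AEval' f :=
    (e'.symm.toLinearMap.comp π).comp e'.toLinearMap with hElin
  have hEE : ∀ x, Elin (Elin x) = Elin x := by
    intro x
    simp only [hElin, LinearMap.comp_apply, LinearEquiv.coe_coe]
    rw [LinearEquiv.apply_symm_apply, hππ]
  set g : (Fin n → F) →ₗ[F] (Fin n → F) :=
    ((Module.AEval'.of f).symm.toLinearMap.comp (Elin.restrictScalars F)).comp
      (Module.AEval'.of f).toLinearMap with hgdef
  have hgapp : ∀ x, g x = (Module.AEval'.of f).symm (Elin (Module.AEval'.of f x)) :=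
    fun x => rfl
  have hgg : g.comp g = g := by
    refine LinearMap.ext fun x => ?_
    simp only [LinearMap.comp_apply]
    rw [hgapp, hgapp, LinearEquiv.apply_symm_apply, hEE]
  have hfg : f.comp g = g.comp f := by
    refine LinearMap.ext fun x => ?_
    simp only [LinearMap.comp_apply]
    rw [hgapp, hgapp]
    rw [← Module.AEval'.of_symm_X_smul, ← map_smul, Module.AEval'.X_smul_of]
  -- the nonzero element fixed by g
  have hone : ∀ (k : ι), Nontrivial (Q k) →
      (Submodule.Quotient.mk 1 : Q k) ≠ 0 := by
    intro k hk h1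
    have hall : ∀ q : Q k, q = 0 := by
      intro q
      obtain ⟨a, rfl⟩ := Submodule.Quotient.mk_surjective _ q
      calc (Submodule.Quotient.mk a : Q k)
          = a • (Submodule.Quotient.mk 1 : Q k) := by
            rw [← Submodule.Quotient.mk_smul, smul_eq_mul, mul_one]
        _ = 0 := by rw [h1, smul_zero]
    obtain ⟨a, b, hab⟩ := hk
    exact hab ((hall a).trans (hall b).symm)
  have hlem : ∀ k : ι,
      g ((Module.AEval'.of f).symm (e'.symm (DirectSum.lof F[X] ι Q k (Submodule.Quotient.mk 1))))
        = (Module.AEval'.of f).symm (e'.symm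
            (DirectSum.lof F[X] ι Q i₀ (DirectSum.component F[X] ι Q i₀
              (DirectSum.lof F[X] ι Q k (Submodule.Quotient.mk 1))))) := by
    intro k
    rw [hgapp, LinearEquiv.apply_symm_apply, hElin]
    simp only [LinearMap.comp_apply, LinearEquiv.coe_coe]
    rw [LinearEquiv.apply_symm_apply, hπ]
    simp only [LinearMap.comp_apply]
  have hx₀ : g ((Module.AEval'.of f).symm (e'.symm
      (DirectSum.lof F[X] ι Q i₀ (Submodule.Quotient.mk 1))))
      = (Module.AEval'.of f).symm (e'.symm
        (DirectSum.lof F[X] ι Q i₀ (Submodule.Quotient.mk 1))) := by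
    rw [hlem, DirectSum.component.lof_self]
  have hy₀ : g ((Module.AEval'.of f).symm (e'.symm
      (DirectSum.lof F[X] ι Q j₀ (Submodule.Quotient.mk 1)))) = 0 := by
    rw [hlem, DirectSum.component.of, dif_neg (Ne.symm hij), map_zero, map_zero, map_zero]
  have hne : ∀ k : ι, Nontrivial (Q k) →
      (Module.AEval'.of f).symm (e'.symm
        (DirectSum.lof F[X] ι Q k (Submodule.Quotient.mk 1))) ≠ 0 := by
    intro k hk h
    apply hone k hk
    have h1 : DirectSum.lof F[X] ι Q k (Submodule.Quotient.mk 1) = 0 :=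
      (LinearEquiv.map_eq_zero_iff _).mp ((LinearEquiv.map_eq_zero_iff _).mp h)
    have h2 := congrArg (DirectSum.component F[X] ι Q k) h1
    rwa [DirectSum.component.lof_self, map_zero] at h2
  have hAmat : A = LinearMap.toMatrix' f := by
    rw [hf, LinearMap.toMatrix'_toLin']
  refine ⟨LinearMap.toMatrix' g, ?_, ?_, ?_, ?_⟩
  · rw [← LinearMap.toMatrix'_comp, hgg]
  · intro h
    have hg0 : g = 0 := by
      have h2 := congrArg Matrix.toLin' h
      rwa [Matrix.toLin'_toMatrix', map_zero] at h2
    rw [hg0] at hx₀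
    exact hne i₀ hQi hx₀.symm
  · intro h
    have hgid : g = LinearMap.id := by
      have h2 := congrArg Matrix.toLin' h
      rwa [Matrix.toLin'_toMatrix', Matrix.toLin'_one] at h2
    rw [hgid] at hy₀
    exact hne j₀ hQj hy₀
  · rw [hAmat, ← LinearMap.toMatrix'_comp, ← LinearMap.toMatrix'_comp, hfg]
end

section
/- Let F be a field and n ≥ 3. If E₁, E₂ ∈ M_n(F) are two noncentral idempotent matrices, then the distance between E₁ and E₂ in the commuting graph Γ(M_n(F)) is at most 2. -/
/-- A matrix is noncentral iff it is not a scalar multiple of the identity. -/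
def Matrix.IsNoncentral {F : Type*} [Field F] {n : ℕ} (A : Matrix (Fin n) (Fin n) F) : Prop :=
  ∀ c : F, A ≠ c • (1 : Matrix (Fin n) (Fin n) F)

/-- The commuting graph of the matrix ring `M_n(F)`: vertices are the noncentral
matrices, and two distinct vertices are adjacent iff they commute. -/
def commutingGraph (F : Type*) [Field F] (n : ℕ) :
    SimpleGraph {A : Matrix (Fin n) (Fin n) F // A.IsNoncentral} where
  Adj A B := A ≠ B ∧ A.val * B.val = B.val * A.val
  symm := ⟨fun A B h => ⟨h.1.symm, h.2.symm⟩⟩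
  loopless := ⟨fun A h => h.1 rfl⟩

namespace CommutingGraphAux

open Matrix

variable {F : Type*} [Field F] {n : ℕ}

lemma mul_vmv (A : Matrix (Fin n) (Fin n) F) (u v : Fin n → F) :
    A * vecMulVec u v = vecMulVec (A *ᵥ u) v := by
  ext i j
  simp [vecMulVec_apply, Matrix.mul_apply, Matrix.mulVec, dotProduct, Finset.sum_mul, mul_assoc]

lemma vmv_mul (u v : Fin n → F) (A : Matrix (Fin n) (Fin n) F) :
    vecMulVec u v * A = vecMulVec u (Aᵀ *ᵥ v) := by
  ext i j
  simp [vecMulVec_apply, Matrix.mul_apply, Matrix.mulVec, dotProduct, Finset.mul_sum,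
    mul_assoc, mul_comm, mul_left_comm]

lemma vmv_mulVec (u v z : Fin n → F) : vecMulVec u v *ᵥ z = (v ⬝ᵥ z) • u := by
  ext i
  simp [vecMulVec_apply, Matrix.mulVec, dotProduct, Finset.mul_sum, mul_assoc, mul_comm,
    mul_left_comm]

lemma smul_vmv (σ : F) (u v : Fin n → F) :
    σ • vecMulVec u v = vecMulVec (σ • u) v := by
  ext i j
  simp [vecMulVec_apply, mul_assoc]

lemma vmv_ne_zero {u v : Fin n → F} (hu : u ≠ 0) (hv : v ≠ 0) : vecMulVec u v ≠ 0 := by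
  obtain ⟨i, hi⟩ := Function.ne_iff.1 hu
  obtain ⟨j, hj⟩ := Function.ne_iff.1 hv
  intro h
  have := congrFun (congrFun h i) j
  simp [vecMulVec_apply] at this
  tauto

lemma vmv_zero_left (v : Fin n → F) : vecMulVec (0 : Fin n → F) v = 0 := by
  ext i j; simp [vecMulVec_apply]

lemma vmv_zero_right (u : Fin n → F) : vecMulVec u (0 : Fin n → F) = 0 := by
  ext i j; simp [vecMulVec_apply]

lemma exists_mulVec_ne {M : Matrix (Fin n) (Fin n) F} (hM : M ≠ 0) : ∃ z, M *ᵥ z ≠ 0 := by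
  by_contra h
  push_neg at h
  apply hM
  ext i j
  have := congrFun (h (Pi.single j 1)) i
  simpa using this

lemma two_rank_one_ne (hn : 3 ≤ n) (u v u₂ v₂ : Fin n → F) {γ : F} (hγ : γ ≠ 0) :
    vecMulVec u v + vecMulVec u₂ v₂ ≠ γ • (1 : Matrix (Fin n) (Fin n) F) := by
  intro h
  set f : (Fin n → F) →ₗ[F] F × F :=
    { toFun := fun z => (v ⬝ᵥ z, v₂ ⬝ᵥ z)
      map_add' := by intro a b; simp [dotProduct_add]
      map_smul' := by intro c a; simp }
  have hninj : ¬ Function.Injective f := by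
    intro hinj
    have := LinearMap.finrank_le_finrank_of_injective hinj
    simp [Module.finrank_pi, Module.finrank_prod] at this
    omega
  rw [Function.not_injective_iff] at hninj
  obtain ⟨a, b, hab, hne⟩ := hninj
  have hz : f (a - b) = 0 := by rw [map_sub, hab, sub_self]
  have h1 : v ⬝ᵥ (a - b) = 0 := congrArg Prod.fst hz
  have h2 : v₂ ⬝ᵥ (a - b) = 0 := congrArg Prod.snd hz
  have h3 := congrArg (fun M => M *ᵥ (a - b)) h
  simp only [Matrix.add_mulVec, vmv_mulVec, h1, h2, zero_smul, add_zero,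
    Matrix.smul_mulVec, Matrix.one_mulVec] at h3
  have h4 : a - b = 0 := by
    have h5 := h3.symm
    rwa [smul_eq_zero, or_iff_right hγ] at h5
  exact hne (sub_eq_zero.1 h4)

lemma exists_middle {b d : Matrix (Fin n) (Fin n) F} (hb : b ≠ 0) (hd : d ≠ 0) :
    ∃ s, b * s * d ≠ 0 := by
  have hb' : ∃ i j, b i j ≠ 0 := by
    by_contra h; push_neg at h; exact hb (by ext i j; simp [h])
  have hd' : ∃ k l, d k l ≠ 0 := by
    by_contra h; push_neg at h; exact hd (by ext k l; simp [h])
  obtain ⟨i, j, hij⟩ := hb'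
  obtain ⟨k, l, hkl⟩ := hd'
  refine ⟨vecMulVec (Pi.single j 1) (Pi.single k 1), ?_⟩
  rw [mul_vmv, vmv_mul]
  apply vmv_ne_zero
  · intro h
    have := congrFun h i
    simp [Matrix.mulVec_single] at this
    exact hij this
  · intro h
    have := congrFun h l
    simp [Matrix.mulVec_single, Matrix.transpose_apply] at this
    exact hkl this

lemma corner_lemma (hn : 3 ≤ n) {P b : Matrix (Fin n) (Fin n) F}
    (hP : P * P = P) (hP0 : P ≠ 0) (hP1 : P ≠ 1)
    (hPb : P * b = b) (hbP : b * P = 0) :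
    ∃ x w : Matrix (Fin n) (Fin n) F,
      P * x = x ∧ x * P = x ∧ P * w = 0 ∧ w * P = 0 ∧ x * b = b * w ∧
      ∀ γ : F, x + w ≠ γ • 1 := by
  have h1P : (1 : Matrix (Fin n) (Fin n) F) - P ≠ 0 := by
    intro h; exact hP1 ((sub_eq_zero.1 h).symm)
  by_cases hu : ∃ u, u ≠ 0 ∧ P *ᵥ u = 0 ∧ b *ᵥ u = 0
  · obtain ⟨u, hu0, hPu, hbu⟩ := hu
    obtain ⟨z, hz⟩ := exists_mulVec_ne (M := (1 - P)ᵀ) (by rwa [Ne, transpose_eq_zero])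
    set v₂ := (1 - P)ᵀ *ᵥ z with hv₂def
    have hPv₂ : Pᵀ *ᵥ v₂ = 0 := by
      rw [hv₂def, Matrix.mulVec_mulVec, ← Matrix.transpose_mul]
      have : (1 - P) * P = 0 := by rw [Matrix.sub_mul, Matrix.one_mul, hP, sub_self]
      rw [this]; simp
    refine ⟨0, vecMulVec u v₂, by simp, by simp, ?_, ?_, ?_, ?_⟩
    · rw [mul_vmv, hPu, vmv_zero_left]
    · rw [vmv_mul, hPv₂, vmv_zero_right]
    · rw [Matrix.zero_mul, mul_vmv, hbu, vmv_zero_left]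
    · intro γ h
      rw [zero_add] at h
      have h2 : P * vecMulVec u v₂ = γ • P := by rw [h]; simp
      rw [mul_vmv, hPu, vmv_zero_left] at h2
      have hγ : γ = 0 := by
        rcases smul_eq_zero.1 h2.symm with h' | h'
        · exact h'
        · exact absurd h' hP0
      rw [hγ, zero_smul] at h
      exact vmv_ne_zero hu0 hz h
  · by_cases hg : ∃ g, g ≠ 0 ∧ Pᵀ *ᵥ g = g ∧ bᵀ *ᵥ g = 0
    · obtain ⟨g, hg0, hPg, hbg⟩ := hg
      obtain ⟨z, hz⟩ := exists_mulVec_ne hP0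
      set u' := P *ᵥ z with hu'def
      have hPu' : P *ᵥ u' = u' := by rw [hu'def, Matrix.mulVec_mulVec, hP]
      refine ⟨vecMulVec u' g, 0, ?_, ?_, by simp, by simp, ?_, ?_⟩
      · rw [mul_vmv, hPu']
      · rw [vmv_mul, hPg]
      · rw [vmv_mul, hbg, vmv_zero_right, Matrix.mul_zero]
      · intro γ h
        rw [add_zero] at h
        have h2 : vecMulVec u' g * P = γ • P := by rw [h]; simp
        rw [vmv_mul, hPg, h] at h2
        have h3 : γ • ((1 : Matrix (Fin n) (Fin n) F) - P) = 0 := by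
          rw [smul_sub, h2]; simp
        have hγ : γ = 0 := by
          rcases smul_eq_zero.1 h3 with h' | h'
          · exact h'
          · exact absurd h' h1P
        rw [hγ, zero_smul] at h
        exact vmv_ne_zero hz hg0 h
    · push_neg at hu hg
      obtain ⟨z, hz⟩ := exists_mulVec_ne (M := 1 - P) h1P
      set u₂ := (1 - P) *ᵥ z with hu₂def
      have hPu₂ : P *ᵥ u₂ = 0 := by
        rw [hu₂def, Matrix.mulVec_mulVec]
        have : P * (1 - P) = 0 := by rw [Matrix.mul_sub, Matrix.mul_one, hP, sub_self]
        rw [this]; simp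
      have hbu₂ : b *ᵥ u₂ ≠ 0 := hu u₂ hz hPu₂
      obtain ⟨z', hz'⟩ := exists_mulVec_ne (M := Pᵀ) (by rwa [Ne, transpose_eq_zero])
      set v₁ := Pᵀ *ᵥ z' with hv₁def
      have hPv₁ : Pᵀ *ᵥ v₁ = v₁ := by
        rw [hv₁def, Matrix.mulVec_mulVec, ← Matrix.transpose_mul, hP]
      have hbv₁ : bᵀ *ᵥ v₁ ≠ 0 := hg v₁ hz' hPv₁
      refine ⟨vecMulVec (b *ᵥ u₂) v₁, vecMulVec u₂ (bᵀ *ᵥ v₁), ?_, ?_, ?_, ?_, ?_, ?_⟩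
      · rw [mul_vmv, Matrix.mulVec_mulVec, hPb]
      · rw [vmv_mul, hPv₁]
      · rw [mul_vmv, hPu₂, vmv_zero_left]
      · rw [vmv_mul, Matrix.mulVec_mulVec, ← Matrix.transpose_mul, hbP]
        simp [vmv_zero_right]
      · rw [vmv_mul, mul_vmv]
      · intro γ h
        rcases eq_or_ne γ 0 with hγ | hγ
        · rw [hγ, zero_smul] at h
          have h2 : P * (vecMulVec (b *ᵥ u₂) v₁ + vecMulVec u₂ (bᵀ *ᵥ v₁)) = 0 := by
            rw [h, Matrix.mul_zero]
          rw [Matrix.mul_add, mul_vmv, mul_vmv, hPu₂, vmv_zero_left, add_zero,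
            Matrix.mulVec_mulVec, hPb] at h2
          exact vmv_ne_zero hbu₂ hz' h2
        · exact two_rank_one_ne hn _ _ _ _ hγ h

lemma verify_comm {P Q b d x w : Matrix (Fin n) (Fin n) F} (c : F)
    (hQd : Q = c • 1 + (1 - 2*c) • P + b + d)
    (hPb : P * b = b) (hbP : b * P = 0) (hPd : P * d = 0) (hdP : d * P = d)
    (hPx : P * x = x) (hxP : x * P = x) (hPw : P * w = 0) (hwP : w * P = 0)
    (hxb : x * b = b * w) (hwd : w * d = d * x) :
    (x + w) * P = P * (x + w) ∧ (x + w) * Q = Q * (x + w) := by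
  have hbx : b * x = 0 := by
    calc b * x = b * (P * x) := by rw [hPx]
    _ = b * P * x := by rw [mul_assoc]
    _ = 0 := by rw [hbP, Matrix.zero_mul]
  have hdw : d * w = 0 := by
    calc d * w = d * P * w := by rw [hdP]
    _ = d * (P * w) := by rw [mul_assoc]
    _ = 0 := by rw [hPw, Matrix.mul_zero]
  have hwb : w * b = 0 := by
    calc w * b = w * (P * b) := by rw [hPb]
    _ = w * P * b := by rw [mul_assoc]
    _ = 0 := by rw [hwP, Matrix.zero_mul]
  have hxd : x * d = 0 := by
    calc x * d = x * P * d := by rw [hxP]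
    _ = x * (P * d) := by rw [mul_assoc]
    _ = 0 := by rw [hPd, Matrix.mul_zero]
  constructor
  · rw [Matrix.add_mul, hxP, hwP, Matrix.mul_add, hPx, hPw]
  · rw [hQd]
    simp only [Matrix.add_mul, Matrix.mul_add, smul_mul_assoc, mul_smul_comm,
      Matrix.one_mul, Matrix.mul_one, hPx, hPw, hxP, hwP, hbx, hdw, hwb, hxd,
      hxb, hwd, smul_zero, add_zero, zero_add]
    module

lemma exists_common (hn : 3 ≤ n) {P Q : Matrix (Fin n) (Fin n) F}
    (hP : P * P = P) (hQ : Q * Q = Q)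
    (hPnc : ∀ γ : F, P ≠ γ • 1) (hne : P * Q ≠ Q * P) :
    ∃ C : Matrix (Fin n) (Fin n) F,
      (∀ γ : F, C ≠ γ • 1) ∧ C * P = P * C ∧ C * Q = Q * C := by
  have hP0 : P ≠ 0 := by simpa using hPnc 0
  have hP1 : P ≠ 1 := by simpa using hPnc 1
  have h1P : (1 : Matrix (Fin n) (Fin n) F) - P ≠ 0 := by
    intro h; exact hP1 ((sub_eq_zero.1 h).symm)
  set D := P + Q - P * Q - Q * P with hD
  have e1 : D * P = P - P * Q * P := by
    rw [hD, Matrix.sub_mul, Matrix.sub_mul, Matrix.add_mul, mul_assoc Q P P, hP]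
    abel
  have e2 : P * D = P - P * Q * P := by
    rw [hD, Matrix.mul_sub, Matrix.mul_sub, Matrix.mul_add, ← mul_assoc P P Q,
      ← mul_assoc P Q P, hP]
    abel
  have e3 : D * Q = Q - Q * P * Q := by
    rw [hD, Matrix.sub_mul, Matrix.sub_mul, Matrix.add_mul, mul_assoc P Q Q,
      hQ]
    abel
  have e4 : Q * D = Q - Q * P * Q := by
    rw [hD, Matrix.mul_sub, Matrix.mul_sub, Matrix.mul_add, ← mul_assoc Q P Q,
      ← mul_assoc Q Q P, hQ]
    abel
  by_cases hDc : ∃ γ : F, D = γ • 1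
  swap
  · push_neg at hDc
    exact ⟨D, hDc, e1.trans e2.symm, e3.trans e4.symm⟩
  obtain ⟨c, hc⟩ := hDc
  have hQ' : Q = c • (1 : Matrix (Fin n) (Fin n) F) - P + P * Q + Q * P := by
    rw [← hc, hD]; abel
  have hPQP : P * Q * P = (1 - c) • P := by
    have h1 : P * D * P = c • P := by
      rw [hc]
      simp [smul_mul_assoc, mul_smul_comm, hP]
    have h2 : P * D * P = P - P * Q * P := by
      rw [e2, Matrix.sub_mul, hP, mul_assoc (P * Q) P P, hP]
    have h12 := h2.symm.trans h1
    have h3 : P * Q * P = P - c • P := by rw [← h12]; abel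
    rw [h3, sub_smul, one_smul]
  have hQPQ : Q * P * Q = (1 - c) • Q := by
    have h1 : Q * D * Q = c • Q := by
      rw [hc]
      simp [smul_mul_assoc, mul_smul_comm, hQ]
    have h2 : Q * D * Q = Q - Q * P * Q := by
      rw [e4, Matrix.sub_mul, hQ, mul_assoc (Q * P) Q Q, hQ]
    have h12 := h2.symm.trans h1
    have h3 : Q * P * Q = Q - c • Q := by rw [← h12]; abel
    rw [h3, sub_smul, one_smul]
  set b := P * Q - P * Q * P with hb
  set d := Q * P - P * Q * P with hd'
  have hPb : P * b = b := by
    rw [hb, Matrix.mul_sub, ← mul_assoc P (P * Q) P, ← mul_assoc P P Q, hP]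
  have hbP : b * P = 0 := by
    rw [hb, Matrix.sub_mul, mul_assoc (P * Q) P P, hP, sub_self]
  have hPd : P * d = 0 := by
    rw [hd', Matrix.mul_sub, ← mul_assoc P Q P, ← mul_assoc P (P * Q) P,
      ← mul_assoc P P Q, hP, sub_self]
  have hdP : d * P = d := by
    rw [hd', Matrix.sub_mul, mul_assoc Q P P, hP, mul_assoc (P * Q) P P, hP]
  have hQdecomp : Q = c • 1 + (1 - 2*c) • P + b + d := by
    rw [hb, hd', hPQP]
    nth_rewrite 1 [hQ']
    module
  have hbmd : b - d = P * Q - Q * P := by rw [hb, hd']; abel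
  have hbd0 : ¬(b = 0 ∧ d = 0) := by
    rintro ⟨h1, h2⟩
    apply hne
    have h3 : P * Q - Q * P = 0 := by rw [← hbmd, h1, h2, sub_zero]
    exact sub_eq_zero.1 h3
  have hB3 : ((1 - c) • P) * ((1 - c) • P) = (1 - c) • ((1 - c) • P) := by
    rw [smul_mul_assoc, mul_smul_comm, hP]
  have hbd : b * d = (c - c^2) • P := by
    have hA : P * Q * (Q * P) = (1 - c) • P := by
      rw [← mul_assoc (P * Q) Q P, mul_assoc P Q Q, hQ, hPQP]
    have hB1 : (P * Q) * ((1 - c) • P) = (1 - c) • ((1 - c) • P) := by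
      rw [mul_smul_comm, hPQP]
    have hB2 : ((1 - c) • P) * (Q * P) = (1 - c) • ((1 - c) • P) := by
      rw [smul_mul_assoc, ← mul_assoc P Q P, hPQP]
    rw [hb, hd', Matrix.sub_mul, Matrix.mul_sub, Matrix.mul_sub, hPQP, hA, hB1, hB2, hB3]
    module
  have hdb : d * b = (c - c^2) • (1 - P) := by
    have hC : Q * P * (P * Q) = (1 - c) • Q := by
      rw [← mul_assoc (Q * P) P Q, mul_assoc Q P P, hP, hQPQ]
    have hQPP : Q * P * ((1 - c) • P) = (1 - c) • (Q * P) := by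
      rw [mul_smul_comm, mul_assoc Q P P, hP]
    have hPPQ : ((1 - c) • P) * (P * Q) = (1 - c) • (P * Q) := by
      rw [smul_mul_assoc, ← mul_assoc P P Q, hP]
    rw [hd', hb, Matrix.sub_mul, Matrix.mul_sub, Matrix.mul_sub, hPQP, hC, hQPP, hPPQ, hB3]
    nth_rewrite 1 [hQ']
    module
  -- case split on mu = c - c^2
  by_cases hmu : c - c^2 = 0
  · -- degenerate case
    have hbd00 : b * d = 0 := by rw [hbd, hmu, zero_smul]
    have hdb00 : d * b = 0 := by rw [hdb, hmu, zero_smul]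
    by_cases hbz : b = 0
    · -- b = 0, d ≠ 0 : transpose trick
      have hdz : d ≠ 0 := fun h => hbd0 ⟨hbz, h⟩
      have hPT : Pᵀ * Pᵀ = Pᵀ := by rw [← Matrix.transpose_mul, hP]
      have hPT0 : Pᵀ ≠ 0 := by rwa [Ne, transpose_eq_zero]
      have hPT1 : Pᵀ ≠ 1 := by
        rw [← Matrix.transpose_one]
        exact fun h => hP1 (Matrix.transpose_inj.1 h)
      have hPTd : Pᵀ * dᵀ = dᵀ := by rw [← Matrix.transpose_mul, hdP]
      have hdTP : dᵀ * Pᵀ = 0 := by rw [← Matrix.transpose_mul, hPd, Matrix.transpose_zero]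
      obtain ⟨x', w', hPx', hxP', hPw', hwP', hxb', hnc'⟩ :=
        corner_lemma hn hPT hPT0 hPT1 hPTd hdTP
      have t1 : P * x'ᵀ = x'ᵀ := by
        have h2 := congrArg Matrix.transpose hxP'
        rwa [Matrix.transpose_mul, Matrix.transpose_transpose] at h2
      have t2 : x'ᵀ * P = x'ᵀ := by
        have h2 := congrArg Matrix.transpose hPx'
        rwa [Matrix.transpose_mul, Matrix.transpose_transpose] at h2
      have t3 : P * w'ᵀ = 0 := by
        have h2 := congrArg Matrix.transpose hwP'
        rwa [Matrix.transpose_mul, Matrix.transpose_transpose, Matrix.transpose_zero] at h2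
      have t4 : w'ᵀ * P = 0 := by
        have h2 := congrArg Matrix.transpose hPw'
        rwa [Matrix.transpose_mul, Matrix.transpose_transpose, Matrix.transpose_zero] at h2
      have t5 : w'ᵀ * d = d * x'ᵀ := by
        have h2 := congrArg Matrix.transpose hxb'
        rw [Matrix.transpose_mul, Matrix.transpose_mul, Matrix.transpose_transpose] at h2
        exact h2.symm
      have hV := verify_comm c hQdecomp hPb hbP hPd hdP t1 t2 t3 t4
        (by rw [hbz, Matrix.mul_zero, Matrix.zero_mul]) t5
      refine ⟨x'ᵀ + w'ᵀ, ?_, hV.1, hV.2⟩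
      intro γ h
      apply hnc' γ
      have h2 := congrArg Matrix.transpose h
      simpa using h2
    · by_cases hdz : d = 0
      · -- d = 0 : corner lemma directly
        obtain ⟨x, w, hPx, hxP, hPw, hwP, hxb, hnc'⟩ :=
          corner_lemma hn hP hP0 hP1 hPb hbP
        have hV := verify_comm c hQdecomp hPb hbP hPd hdP hPx hxP hPw hwP hxb
          (by rw [hdz, Matrix.mul_zero, Matrix.zero_mul])
        exact ⟨x + w, hnc', hV.1, hV.2⟩
      · -- both b, d nonzero : x = b * s * d
        obtain ⟨s, hs⟩ := exists_middle hbz hdz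
        set x := b * s * d with hx
        have hPx : P * x = x := by
          rw [hx, ← mul_assoc P (b * s) d, ← mul_assoc P b s, hPb]
        have hxP : x * P = x := by
          rw [hx, mul_assoc (b * s) d P, hdP]
        have hxb : x * b = b * (0 : Matrix (Fin n) (Fin n) F) := by
          rw [hx, Matrix.mul_zero, mul_assoc (b * s) d b, hdb00, Matrix.mul_zero]
        have hwd : (0 : Matrix (Fin n) (Fin n) F) * d = d * x := by
          rw [Matrix.zero_mul, hx, ← mul_assoc d (b * s) d, ← mul_assoc d b s, hdb00,
            Matrix.zero_mul, Matrix.zero_mul]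
        have hV := verify_comm c hQdecomp hPb hbP hPd hdP hPx hxP
          (Matrix.mul_zero P) (Matrix.zero_mul P) hxb hwd
        refine ⟨x + 0, ?_, hV.1, hV.2⟩
        intro γ h
        rw [add_zero] at h
        have h2 : γ • P = γ • (1 : Matrix (Fin n) (Fin n) F) := by
          calc γ • P = P * (γ • 1) := by rw [mul_smul_comm, Matrix.mul_one]
          _ = P * x := by rw [h]
          _ = x := hPx
          _ = γ • 1 := h
        have hγ : γ = 0 := by
          by_contra hγ
          exact hP1 (smul_right_injective _ hγ h2)
        rw [hγ, zero_smul] at h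
        exact hs h
  · -- main case : mu ≠ 0
    obtain ⟨z, hz⟩ := exists_mulVec_ne hP0
    set u := P *ᵥ z with hu
    have hPu : P *ᵥ u = u := by rw [hu, Matrix.mulVec_mulVec, hP]
    obtain ⟨z', hz'⟩ := exists_mulVec_ne (M := Pᵀ) (by rwa [Ne, transpose_eq_zero])
    set v := Pᵀ *ᵥ z' with hv
    have hPv : Pᵀ *ᵥ v = v := by rw [hv, Matrix.mulVec_mulVec, ← Matrix.transpose_mul, hP]
    set x := vecMulVec u v with hx
    set w := (c - c^2)⁻¹ • (d * x * b) with hw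
    have hPx : P * x = x := by rw [hx, mul_vmv, hPu]
    have hxP : x * P = x := by rw [hx, vmv_mul, hPv]
    have hPw : P * w = 0 := by
      rw [hw, mul_smul_comm, ← mul_assoc P (d * x) b, ← mul_assoc P d x, hPd,
        Matrix.zero_mul, Matrix.zero_mul, smul_zero]
    have hwP : w * P = 0 := by
      rw [hw, smul_mul_assoc, mul_assoc (d * x) b P, hbP, Matrix.mul_zero, smul_zero]
    have hxb : x * b = b * w := by
      rw [hw, mul_smul_comm, ← mul_assoc b (d * x) b, ← mul_assoc b d x, hbd,
        smul_mul_assoc (c - c^2) P x, hPx, smul_mul_assoc, inv_smul_smul₀ hmu]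
    have hwd : w * d = d * x := by
      rw [hw, smul_mul_assoc, mul_assoc (d * x) b d, hbd, mul_smul_comm,
        mul_assoc d x P, hxP, inv_smul_smul₀ hmu]
    have hV := verify_comm c hQdecomp hPb hbP hPd hdP hPx hxP hPw hwP hxb hwd
    have hwvmv : w = vecMulVec ((c - c^2)⁻¹ • (d *ᵥ u)) (bᵀ *ᵥ v) := by
      rw [hw, hx, mul_vmv, vmv_mul, smul_vmv]
    refine ⟨x + w, ?_, hV.1, hV.2⟩
    intro γ h
    rcases eq_or_ne γ 0 with hγ | hγ
    · rw [hγ, zero_smul] at h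
      have h2 : P * (x + w) * P = 0 := by rw [h, Matrix.mul_zero, Matrix.zero_mul]
      rw [Matrix.mul_add, hPx, hPw, add_zero, hxP] at h2
      apply vmv_ne_zero hz hz'
      rw [← hx]
      exact h2
    · rw [hwvmv] at h
      exact two_rank_one_ne hn u v _ _ hγ h

end CommutingGraphAux

/-- Two noncentral idempotent matrices are at distance at most 2 in the commuting graph. -/
theorem edist_le_two_of_idempotents
    (F : Type*) [Field F] (n : ℕ) (hn : 3 ≤ n)
    (E₁ E₂ : Matrix (Fin n) (Fin n) F)
    (hE₁ : E₁ * E₁ = E₁) (hE₂ : E₂ * E₂ = E₂)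
    (h₁ : E₁.IsNoncentral) (h₂ : E₂.IsNoncentral) :
    (commutingGraph F n).edist ⟨E₁, h₁⟩ ⟨E₂, h₂⟩ ≤ 2 := by
  by_cases heq : E₁ = E₂
  · have hv : (⟨E₁, h₁⟩ : {A : Matrix (Fin n) (Fin n) F // A.IsNoncentral}) = ⟨E₂, h₂⟩ :=
      Subtype.ext heq
    rw [hv, SimpleGraph.edist_self]
    exact zero_le
  by_cases hcomm : E₁ * E₂ = E₂ * E₁
  · have hadj : (commutingGraph F n).Adj ⟨E₁, h₁⟩ ⟨E₂, h₂⟩ :=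
      ⟨fun h => heq (congrArg Subtype.val h), hcomm⟩
    have hw := SimpleGraph.edist_le (SimpleGraph.Walk.cons hadj SimpleGraph.Walk.nil)
    simp only [SimpleGraph.Walk.length_cons, SimpleGraph.Walk.length_nil] at hw
    calc (commutingGraph F n).edist ⟨E₁, h₁⟩ ⟨E₂, h₂⟩ ≤ (1 : ℕ) := by exact_mod_cast hw
    _ ≤ 2 := by norm_num
  · obtain ⟨C, hCnc, hCP, hCQ⟩ := CommutingGraphAux.exists_common hn hE₁ hE₂ h₁ hcomm
    have hC1 : C ≠ E₁ := fun h => hcomm (h ▸ hCQ)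
    have hC2 : C ≠ E₂ := fun h => hcomm (by rw [h] at hCP; exact hCP.symm)
    have a1 : (commutingGraph F n).Adj ⟨E₁, h₁⟩ ⟨C, hCnc⟩ :=
      ⟨fun h => hC1 (congrArg Subtype.val h).symm, hCP.symm⟩
    have a2 : (commutingGraph F n).Adj ⟨C, hCnc⟩ ⟨E₂, h₂⟩ :=
      ⟨fun h => hC2 (congrArg Subtype.val h), hCQ⟩
    have hw := SimpleGraph.edist_le
      (SimpleGraph.Walk.cons a1 (SimpleGraph.Walk.cons a2 SimpleGraph.Walk.nil))
    simp only [SimpleGraph.Walk.length_cons, SimpleGraph.Walk.length_nil] at hw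
    exact_mod_cast hw
end

section
/- Let F be a field and n ≥ 3. If N₁, N₂ ∈ M_n(F) are two nonzero nilpotent matrices, both of nilpotency index 2 (i.e., N_i ≠ 0 and N_i² = 0), then the distance between N₁ and N₂ in the commuting graph Γ(M_n(F)) is at most 2. -/
private lemma det3_aux {F : Type*} [Field F] (a b e d : Fin 3 → F) :
    (Matrix.of fun i j => a i * b j + e i * d j).det = 0 := by
  simp [Matrix.det_fin_three]; ring

private lemma std_entry {F : Type*} [Field F] {n : ℕ} (E : Matrix (Fin n) (Fin n) F)
    (p q i j : Fin n) :
    (E * Matrix.single p q (1 : F) * E) i j = E i p * E q j := by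
  simp [Matrix.mul_apply, Matrix.single, Finset.mul_sum, ite_and, Matrix.of_apply]

private lemma noncentral_of_sq_eq_zero {F : Type*} [Field F] {n : ℕ} (hn : 1 ≤ n)
    {X : Matrix (Fin n) (Fin n) F} (hX0 : X ≠ 0) (hsq : X * X = 0) : X.IsNoncentral := by
  intro μ hμ
  rw [hμ] at hsq
  have h1 : (μ * μ) • (1 : Matrix (Fin n) (Fin n) F) = 0 := by
    rw [← hsq, smul_mul_assoc, one_mul, smul_smul]
  have h2 : μ * μ = 0 := by
    have := Matrix.ext_iff.mpr h1 ⟨0, hn⟩ ⟨0, hn⟩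
    simpa [Matrix.one_apply] using this
  apply hX0
  rw [hμ, mul_self_eq_zero.mp h2, zero_smul]

/-- The hard case: `N₁N₂ + N₂N₁ = c•1` with `c ≠ 0`, and every `P X P` is a multiple
of `P` where `P = N₁N₂`; this is impossible for `n ≥ 3`. -/
private lemma key_false {F : Type*} [Field F] {n : ℕ} (hn : 3 ≤ n)
    {N₁ N₂ : Matrix (Fin n) (Fin n) F} {c : F} (hc0 : c ≠ 0)
    (hs1 : N₁ * N₁ = 0) (hs2 : N₂ * N₂ = 0)
    (hQ : N₂ * N₁ = c • 1 - N₁ * N₂)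
    (hcen : ∀ X : Matrix (Fin n) (Fin n) F, ∃ ν : F,
      (N₁ * N₂) * X * (N₁ * N₂) = ν • (N₁ * N₂)) : False := by
  obtain ⟨P, hP⟩ : ∃ P, P = N₁ * N₂ := ⟨_, rfl⟩
  rw [← hP] at hQ hcen
  have h_pn : P * N₂ = 0 := by rw [hP, mul_assoc, hs2, mul_zero]
  have hPP : P * P = c • P := by
    calc P * P = N₁ * ((N₂ * N₁) * N₂) := by rw [hP, mul_assoc, ← mul_assoc N₂]
    _ = N₁ * ((c • 1 - P) * N₂) := by rw [hQ]
    _ = N₁ * (c • N₂) := by rw [sub_mul, smul_mul_assoc, one_mul, h_pn, sub_zero]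
    _ = c • P := by rw [mul_smul_comm, ← hP]
  have h_pn1 : P * N₁ = c • N₁ := by
    calc P * N₁ = N₁ * (N₂ * N₁) := by rw [hP, mul_assoc]
    _ = N₁ * (c • 1) - N₁ * P := by rw [hQ, mul_sub]
    _ = c • N₁ - N₁ * P := by rw [mul_smul_comm, mul_one]
    _ = c • N₁ := by rw [hP, ← mul_assoc, hs1, zero_mul, sub_zero]
  have h_n2p : N₂ * P = c • N₂ := by
    calc N₂ * P = (N₂ * N₁) * N₂ := by rw [hP, mul_assoc]
    _ = (c • 1) * N₂ - P * N₂ := by rw [hQ, sub_mul]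
    _ = c • N₂ := by rw [h_pn, sub_zero, smul_mul_assoc, one_mul]
  -- P ≠ 0
  have hPne : P ≠ 0 := by
    intro h0
    have h1 : N₂ * N₁ = c • 1 := by rw [hQ, h0, sub_zero]
    have h2 : (N₂ * N₁) * (N₂ * N₁) = 0 := by
      rw [mul_assoc, ← mul_assoc N₁, ← hP, h0, zero_mul, mul_zero]
    rw [h1, smul_mul_assoc, one_mul, smul_smul] at h2
    have h3 := Matrix.ext_iff.mpr h2 ⟨0, by omega⟩ ⟨0, by omega⟩
    simp [Matrix.one_apply, mul_self_eq_zero] at h3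
    exact hc0 h3
  obtain ⟨i₀, j₀, hij⟩ : ∃ i j, P i j ≠ 0 := by
    by_contra h
    push_neg at h
    exact hPne (by ext i j; simpa using h i j)
  -- entrywise structure
  have hent : ∀ p q : Fin n, ∃ ν : F, ∀ i j, P i p * P q j = ν * P i j := by
    intro p q
    obtain ⟨ν, hν⟩ := hcen (Matrix.single p q 1)
    refine ⟨ν, fun i j => ?_⟩
    have := Matrix.ext_iff.mpr hν i j
    rw [std_entry] at this
    simpa [Matrix.smul_apply] using this
  choose ν hν using hent
  obtain ⟨v, hv⟩ : ∃ v : Fin n → F, v = fun i => P i j₀ := ⟨_, rfl⟩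
  have hv' : ∀ i, v i = P i j₀ := fun i => by rw [hv]
  have hvi₀ : v i₀ ≠ 0 := by rw [hv' i₀]; exact hij
  obtain ⟨r, hr⟩ : ∃ r : Fin n → F, r = fun p => ν p i₀ * (v i₀)⁻¹ := ⟨_, rfl⟩
  have hr' : ∀ p, r p = ν p i₀ * (v i₀)⁻¹ := fun p => by rw [hr]
  have hPvr : ∀ i p, P i p = v i * r p := by
    intro i p
    have h1 := hν p i₀ i j₀
    rw [← hv' i₀, ← hv' i] at h1
    rw [hr' p]
    linear_combination (v i₀)⁻¹ * h1 - P i p * (inv_mul_cancel₀ hvi₀)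
  have ht : (∑ k, r k * v k) = c := by
    have h2 : (P * P) i₀ j₀ = v i₀ * ∑ k, r k * v k := by
      rw [Matrix.mul_apply, Finset.mul_sum]
      refine Finset.sum_congr rfl fun k _ => ?_
      rw [hPvr i₀ k, ← hv' k]; ring
    have h3 : (P * P) i₀ j₀ = c * v i₀ := by
      rw [hPP, Matrix.smul_apply, smul_eq_mul, ← hv' i₀]
    have h4 : v i₀ * (∑ k, r k * v k) = v i₀ * c := by rw [← h2, h3]; ring
    exact mul_left_cancel₀ hvi₀ h4
  obtain ⟨s, hs⟩ : ∃ s : Fin n → F, s = fun j => ∑ k, r k * N₁ k j := ⟨_, rfl⟩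
  have hs' : ∀ j, s j = ∑ k, r k * N₁ k j := fun j => by rw [hs]
  obtain ⟨w, hw⟩ : ∃ w : Fin n → F, w = fun i => ∑ k, N₂ i k * v k := ⟨_, rfl⟩
  have hw' : ∀ i, w i = ∑ k, N₂ i k * v k := fun i => by rw [hw]
  have hN1e : ∀ i j, c * N₁ i j = v i * s j := by
    intro i j
    have h1 := Matrix.ext_iff.mpr h_pn1 i j
    rw [Matrix.mul_apply, Matrix.smul_apply, smul_eq_mul] at h1
    rw [hs' j, ← h1, Finset.mul_sum]
    refine Finset.sum_congr rfl fun k _ => ?_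
    rw [hPvr i k]; ring
  have hN2e : ∀ i j, c * N₂ i j = w i * r j := by
    intro i j
    have h1 := Matrix.ext_iff.mpr h_n2p i j
    rw [Matrix.mul_apply, Matrix.smul_apply, smul_eq_mul] at h1
    rw [hw' i, ← h1, Finset.sum_mul]
    refine Finset.sum_congr rfl fun k _ => ?_
    rw [hPvr k j]; ring
  have hdelta : ∀ i j, w i * s j =
      c * (c * (if i = j then (1 : F) else 0) - v i * r j) := by
    intro i j
    have h4 := Matrix.ext_iff.mpr hQ i j
    rw [Matrix.sub_apply, Matrix.smul_apply, Matrix.one_apply, smul_eq_mul] at h4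
    have h5 : (∑ k, (c * N₂ i k) * (c * N₁ k j)) = (w i * s j) * c := by
      calc (∑ k, (c * N₂ i k) * (c * N₁ k j)) = ∑ k, (w i * r k) * (v k * s j) := by
            refine Finset.sum_congr rfl fun k _ => by rw [hN2e i k, hN1e k j]
      _ = (w i * s j) * ∑ k, r k * v k := by
            rw [Finset.mul_sum]
            exact Finset.sum_congr rfl fun k _ => by ring
      _ = (w i * s j) * c := by rw [ht]
    have h6 : (∑ k, (c * N₂ i k) * (c * N₁ k j)) = c * c * ((N₂ * N₁) i j) := by
      rw [Matrix.mul_apply, Finset.mul_sum]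
      exact Finset.sum_congr rfl fun k _ => by ring
    have h7 : (w i * s j) * c
        = c * c * ((c * (if i = j then (1:F) else 0)) - P i j) := by
      rw [← h5, h6, h4]
    rw [hPvr i j] at h7
    apply mul_right_cancel₀ hc0
    rw [h7]; ring
  -- build the 3×3 contradiction
  have h3n : ∀ i : Fin 3, (i : ℕ) < n := fun i => lt_of_lt_of_le i.isLt hn
  obtain ⟨f, hf⟩ : ∃ f : Fin 3 → Fin n, f = fun (i : Fin 3) => Fin.mk (i : ℕ) (h3n i) := ⟨_, rfl⟩
  have hfinj : Function.Injective f := by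
    intro a b hab
    rw [hf] at hab
    exact Fin.ext (by simpa using congrArg Fin.val hab)
  have hH : (Matrix.of fun i j : Fin 3 =>
      (c * v (f i)) * r (f j) + w (f i) * s (f j))
      = (c * c) • (1 : Matrix (Fin 3) (Fin 3) F) := by
    ext i j
    have h7 := hdelta (f i) (f j)
    have h8 : (if f i = f j then (1:F) else 0) = (if i = j then (1:F) else 0) := by
      by_cases hij' : i = j
      · simp [hij']
      · rw [if_neg hij', if_neg (fun h => hij' (hfinj h))]
    rw [h8] at h7
    rw [Matrix.of_apply, Matrix.smul_apply, Matrix.one_apply, smul_eq_mul]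
    linear_combination h7
  have hdet : ((c * c) • (1 : Matrix (Fin 3) (Fin 3) F)).det = 0 := by
    rw [← hH]
    exact det3_aux (fun i => c * v (f i)) (fun j => r (f j))
      (fun i => w (f i)) (fun j => s (f j))
  rw [Matrix.det_smul, Matrix.det_one, mul_one] at hdet
  have hcc : c * c = 0 := by
    have h9 : (c * c) ^ (3 : ℕ) = 0 := by simpa using hdet
    exact pow_eq_zero_iff (by norm_num) |>.mp h9
  exact hc0 (mul_self_eq_zero.mp hcc)

/-- The `c ≠ 0` scalar case: produce a noncentral matrix commuting with both. -/
private lemma exists_c_ne {F : Type*} [Field F] {n : ℕ} (hn : 3 ≤ n)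
    {N₁ N₂ : Matrix (Fin n) (Fin n) F} {c : F} (hc0 : c ≠ 0)
    (hs1 : N₁ * N₁ = 0) (hs2 : N₂ * N₂ = 0)
    (hc : N₁ * N₂ + N₂ * N₁ = c • 1) :
    ∃ M : Matrix (Fin n) (Fin n) F, M.IsNoncentral ∧ N₁ * M = M * N₁ ∧ N₂ * M = M * N₂ := by
  have hQ : N₂ * N₁ = c • 1 - N₁ * N₂ := eq_sub_of_add_eq' hc
  obtain ⟨P, hP⟩ : ∃ P, P = N₁ * N₂ := ⟨_, rfl⟩
  rw [← hP] at hQ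
  have h_np : N₁ * P = 0 := by rw [hP, ← mul_assoc, hs1, zero_mul]
  have h_pn : P * N₂ = 0 := by rw [hP, mul_assoc, hs2, mul_zero]
  have hPP : P * P = c • P := by
    calc P * P = N₁ * ((N₂ * N₁) * N₂) := by rw [hP, mul_assoc, ← mul_assoc N₂]
    _ = N₁ * ((c • 1 - P) * N₂) := by rw [hQ]
    _ = N₁ * (c • N₂) := by rw [sub_mul, smul_mul_assoc, one_mul, h_pn, sub_zero]
    _ = c • P := by rw [mul_smul_comm, ← hP]
  -- key multiplication facts about Y = P*X*P
  have e_PY : ∀ X : Matrix (Fin n) (Fin n) F, P * (P * X * P) = c • (P * X * P) := by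
    intro X
    rw [← mul_assoc, ← mul_assoc, hPP, smul_mul_assoc, smul_mul_assoc]
  have e_YP : ∀ X : Matrix (Fin n) (Fin n) F, (P * X * P) * P = c • (P * X * P) := by
    intro X
    rw [mul_assoc, hPP, mul_smul_comm]
  have e1 : ∀ X : Matrix (Fin n) (Fin n) F, N₁ * (P * X * P) = 0 := by
    intro X
    rw [← mul_assoc, ← mul_assoc, h_np, zero_mul, zero_mul]
  have e1' : ∀ X : Matrix (Fin n) (Fin n) F, (P * X * P) * N₂ = 0 := by
    intro X
    rw [mul_assoc, h_pn, mul_zero]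
  by_cases hX : ∃ X : Matrix (Fin n) (Fin n) F, ∀ μ : F,
      P * X * P + c⁻¹ • (N₂ * (P * X * P) * N₁) ≠ μ • 1
  · obtain ⟨X, hXnc⟩ := hX
    refine ⟨P * X * P + c⁻¹ • (N₂ * (P * X * P) * N₁), hXnc, ?_, ?_⟩
    · -- N₁ commutes
      have e3 : N₁ * (N₂ * (P * X * P) * N₁) = c • ((P * X * P) * N₁) := by
        rw [← mul_assoc, ← mul_assoc, ← hP, e_PY X, smul_mul_assoc]
      have e4 : (N₂ * (P * X * P) * N₁) * N₁ = 0 := by rw [mul_assoc, hs1, mul_zero]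
      calc N₁ * (P * X * P + c⁻¹ • (N₂ * (P * X * P) * N₁))
          = N₁ * (P * X * P) + c⁻¹ • (N₁ * (N₂ * (P * X * P) * N₁)) := by
            rw [mul_add, mul_smul_comm]
      _ = (P * X * P) * N₁ := by
            rw [e1 X, e3, zero_add, smul_smul, inv_mul_cancel₀ hc0, one_smul]
      _ = (P * X * P) * N₁ + c⁻¹ • ((N₂ * (P * X * P) * N₁) * N₁) := by
            rw [e4, smul_zero, add_zero]
      _ = (P * X * P + c⁻¹ • (N₂ * (P * X * P) * N₁)) * N₁ := by
            rw [add_mul, smul_mul_assoc]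
    · -- N₂ commutes
      have e5 : N₂ * (N₂ * (P * X * P) * N₁) = 0 := by
        rw [← mul_assoc, ← mul_assoc, hs2, zero_mul, zero_mul]
      have e6 : (N₂ * (P * X * P) * N₁) * N₂ = c • (N₂ * (P * X * P)) := by
        rw [mul_assoc, ← hP, mul_assoc, e_YP X, mul_smul_comm]
      calc N₂ * (P * X * P + c⁻¹ • (N₂ * (P * X * P) * N₁))
          = N₂ * (P * X * P) + c⁻¹ • (N₂ * (N₂ * (P * X * P) * N₁)) := by
            rw [mul_add, mul_smul_comm]
      _ = N₂ * (P * X * P) := by rw [e5, smul_zero, add_zero]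
      _ = (P * X * P) * N₂ + c⁻¹ • ((N₂ * (P * X * P) * N₁) * N₂) := by
            rw [e1' X, e6, smul_smul, inv_mul_cancel₀ hc0, one_smul, zero_add]
      _ = (P * X * P + c⁻¹ • (N₂ * (P * X * P) * N₁)) * N₂ := by
            rw [add_mul, smul_mul_assoc]
  · push_neg at hX
    exfalso
    have hcen : ∀ X : Matrix (Fin n) (Fin n) F, ∃ ν : F,
        (N₁ * N₂) * X * (N₁ * N₂) = ν • (N₁ * N₂) := by
      rw [← hP]
      intro X
      obtain ⟨μ, hμ⟩ := hX X
      refine ⟨(c * c)⁻¹ * (μ * c), ?_⟩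
      have hPN2 : ∀ Z : Matrix (Fin n) (Fin n) F, P * (N₂ * Z * N₁) = 0 := by
        intro Z
        rw [← mul_assoc, ← mul_assoc, h_pn, zero_mul, zero_mul]
      have hL : P * (P * X * P + c⁻¹ • (N₂ * (P * X * P) * N₁)) * P
          = (c * c) • (P * X * P) := by
        rw [mul_add, mul_smul_comm, hPN2, smul_zero, add_zero]
        rw [e_PY X, smul_mul_assoc, e_YP X, smul_smul]
      have hR : P * (μ • (1 : Matrix (Fin n) (Fin n) F)) * P = (μ * c) • P := by
        rw [mul_smul_comm, mul_one, smul_mul_assoc, hPP, smul_smul]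
      have h9 : (c * c) • (P * X * P) = (μ * c) • P := by rw [← hL, hμ, hR]
      calc P * X * P = (c * c)⁻¹ • ((c * c) • (P * X * P)) := by
            rw [smul_smul, inv_mul_cancel₀ (mul_ne_zero hc0 hc0), one_smul]
      _ = (c * c)⁻¹ • ((μ * c) • P) := by rw [h9]
      _ = ((c * c)⁻¹ * (μ * c)) • P := by rw [smul_smul]
    exact key_false hn hc0 hs1 hs2 (by rw [hP] at hQ; exact hQ) hcen

private lemma exists_mid {F : Type*} [Field F] {n : ℕ} (hn : 3 ≤ n)
    {N₁ N₂ : Matrix (Fin n) (Fin n) F}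
    (hs1 : N₁ * N₁ = 0) (hs2 : N₂ * N₂ = 0) (hnc : N₁ * N₂ ≠ N₂ * N₁) :
    ∃ M : Matrix (Fin n) (Fin n) F, M.IsNoncentral ∧ N₁ * M = M * N₁ ∧ N₂ * M = M * N₂ := by
  by_cases hA : (N₁ * N₂ + N₂ * N₁).IsNoncentral
  · refine ⟨N₁ * N₂ + N₂ * N₁, hA, ?_, ?_⟩
    · have l : N₁ * (N₁ * N₂ + N₂ * N₁) = N₁ * N₂ * N₁ := by
        rw [mul_add, ← mul_assoc, hs1, zero_mul, zero_add, ← mul_assoc]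
      have r : (N₁ * N₂ + N₂ * N₁) * N₁ = N₁ * N₂ * N₁ := by
        rw [add_mul, mul_assoc N₂, hs1, mul_zero, add_zero]
      rw [l, r]
    · have l : N₂ * (N₁ * N₂ + N₂ * N₁) = N₂ * N₁ * N₂ := by
        rw [mul_add, ← mul_assoc, ← mul_assoc, hs2, zero_mul, add_zero]
      have r : (N₁ * N₂ + N₂ * N₁) * N₂ = N₂ * N₁ * N₂ := by
        rw [add_mul, mul_assoc N₁, hs2, mul_zero, zero_add]
      rw [l, r]
  · rw [Matrix.IsNoncentral] at hA
    push_neg at hA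
    obtain ⟨c, hc⟩ := hA
    by_cases hc0 : c = 0
    · subst hc0
      rw [zero_smul] at hc
      have hQ : N₂ * N₁ = -(N₁ * N₂) := by
        rw [add_comm] at hc
        exact eq_neg_of_add_eq_zero_left hc
      have hsq : (N₁ * N₂) * (N₁ * N₂) = 0 := by
        calc (N₁ * N₂) * (N₁ * N₂) = N₁ * ((N₂ * N₁) * N₂) := by
              rw [mul_assoc, ← mul_assoc N₂]
        _ = -(N₁ * ((N₁ * N₂) * N₂)) := by rw [hQ, neg_mul, mul_neg]
        _ = -((N₁ * N₁) * (N₂ * N₂)) := by rw [mul_assoc N₁ N₂ N₂, ← mul_assoc]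
        _ = 0 := by rw [hs1, zero_mul, neg_zero]
      have hne : N₁ * N₂ ≠ 0 := by
        intro h0
        exact hnc (by rw [h0, hQ, h0, neg_zero])
      refine ⟨N₁ * N₂, noncentral_of_sq_eq_zero (by omega) hne hsq, ?_, ?_⟩
      · have l : N₁ * (N₁ * N₂) = 0 := by rw [← mul_assoc, hs1, zero_mul]
        have r : (N₁ * N₂) * N₁ = 0 := by
          rw [mul_assoc, hQ, mul_neg, ← mul_assoc, hs1, zero_mul, neg_zero]
        rw [l, r]
      · have l : N₂ * (N₁ * N₂) = 0 := by
          rw [← mul_assoc, hQ, neg_mul, mul_assoc, hs2, mul_zero, neg_zero]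
        have r : (N₁ * N₂) * N₂ = 0 := by rw [mul_assoc, hs2, mul_zero]
        rw [l, r]
    · exact exists_c_ne hn hc0 hs1 hs2 hc

/-- Two nonzero nilpotent matrices of index 2 are at distance at most 2 in the
commuting graph. -/
theorem edist_le_two_of_squareZero
    (F : Type*) [Field F] (n : ℕ) (hn : 3 ≤ n)
    (N₁ N₂ : Matrix (Fin n) (Fin n) F)
    (hN₁ : N₁ ≠ 0) (hN₂ : N₂ ≠ 0) (hN₁sq : N₁ ^ 2 = 0) (hN₂sq : N₂ ^ 2 = 0)
    (h₁ : N₁.IsNoncentral) (h₂ : N₂.IsNoncentral) :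
    (commutingGraph F n).edist ⟨N₁, h₁⟩ ⟨N₂, h₂⟩ ≤ 2 := by
  have hs1 : N₁ * N₁ = 0 := by rw [← pow_two]; exact hN₁sq
  have hs2 : N₂ * N₂ = 0 := by rw [← pow_two]; exact hN₂sq
  by_cases hcomm : N₁ * N₂ = N₂ * N₁
  · by_cases heq : N₁ = N₂
    · subst heq
      have hv : (⟨N₁, h₁⟩ : {A : Matrix (Fin n) (Fin n) F // A.IsNoncentral}) = ⟨N₁, h₂⟩ :=
        Subtype.ext rfl
      rw [hv, SimpleGraph.edist_self]
      exact zero_le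
    · have hadj : (commutingGraph F n).Adj ⟨N₁, h₁⟩ ⟨N₂, h₂⟩ := by
        refine ⟨fun h => heq ?_, hcomm⟩
        exact Subtype.mk_eq_mk.mp h
      have := SimpleGraph.edist_le hadj.toWalk
      simp at this
      exact le_trans this (by norm_num)
  · obtain ⟨M, hM, hc1, hc2⟩ := exists_mid hn hs1 hs2 hcomm
    have ha1 : (commutingGraph F n).Adj ⟨N₁, h₁⟩ ⟨M, hM⟩ := by
      refine ⟨fun h => hcomm ?_, hc1⟩
      have hNM : N₁ = M := Subtype.mk_eq_mk.mp h
      rw [hNM]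
      exact hc2.symm
    have ha2 : (commutingGraph F n).Adj ⟨M, hM⟩ ⟨N₂, h₂⟩ := by
      refine ⟨fun h => hcomm ?_, hc2.symm⟩
      have hNM : M = N₂ := Subtype.mk_eq_mk.mp h
      rw [← hNM]
      exact hc1
    have := SimpleGraph.edist_le
      (SimpleGraph.Walk.cons ha1 (SimpleGraph.Walk.cons ha2 SimpleGraph.Walk.nil))
    simpa using this
end

section
/- Let F be a field and n ≥ 3. If E, N ∈ M_n(F) are such that E is a nontrivial idempotent (E² = E, E ≠ 0, E ≠ 1) and N is a nonzero nilpotent matrix of nilpotency index 2 (N ≠ 0, N² = 0), then the distance between E and N in the commuting graph Γ(M_n(F)) is at most 2. -/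
open Matrix

namespace CommGraphAux

variable {F : Type*} [Field F] {n : ℕ}

lemma exists_entry_ne {A : Matrix (Fin n) (Fin n) F} (hA : A ≠ 0) :
    ∃ i j, A i j ≠ 0 := by
  by_contra h
  push_neg at h
  exact hA (by ext i j; simpa using h i j)

lemma vecMulVec_mulVec (u v x : Fin n → F) :
    (vecMulVec u v) *ᵥ x = (v ⬝ᵥ x) • u := by
  funext i
  simp [vecMulVec_apply, Matrix.mulVec, dotProduct, Pi.smul_apply, smul_eq_mul,
    Finset.sum_mul]
  ring_nf

lemma mul_vecMulVec (A : Matrix (Fin n) (Fin n) F) (u v : Fin n → F) :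
    A * vecMulVec u v = vecMulVec (A *ᵥ u) v := by
  ext i j
  simp [vecMulVec_apply, Matrix.mul_apply, Matrix.mulVec, dotProduct, Finset.sum_mul, mul_assoc]

lemma vecMulVec_mul (u v : Fin n → F) (B : Matrix (Fin n) (Fin n) F) :
    vecMulVec u v * B = vecMulVec u (v ᵥ* B) := by
  ext i j
  simp [vecMulVec_apply, Matrix.mul_apply, Matrix.vecMul, dotProduct, Finset.mul_sum, mul_assoc]

lemma mul_std_mul (A B : Matrix (Fin n) (Fin n) F) (a b : Fin n) :
    A * Matrix.single a b (1 : F) * B = vecMulVec (fun i => A i a) (fun j => B b j) := by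
  rw [Matrix.single_eq_single_vecMulVec_single, mul_vecMulVec, vecMulVec_mul]
  simp [Matrix.mulVec_single, Matrix.single_vecMul]
  rfl

lemma not_sum_rankOne (hn : 3 ≤ n) (u v u' v' : Fin n → F)
    (h : vecMulVec u v + vecMulVec u' v' = (1 : Matrix (Fin n) (Fin n) F)) : False := by
  let f : (Fin n → F) →ₗ[F] F × F :=
    { toFun := fun x => (v ⬝ᵥ x, v' ⬝ᵥ x)
      map_add' := by intro x y; simp [dotProduct_add]
      map_smul' := by intro c x; simp [dotProduct_smul] }
  have hker : LinearMap.ker f ≠ ⊥ := by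
    intro hbot
    have hinj : Function.Injective f := LinearMap.ker_eq_bot.mp hbot
    have h1 : Module.finrank F (Fin n → F) ≤ Module.finrank F (F × F) :=
      LinearMap.finrank_le_finrank_of_injective hinj
    rw [Module.finrank_pi, Module.finrank_prod, Module.finrank_self] at h1
    simp at h1
    omega
  obtain ⟨x, hx, hx0⟩ := Submodule.exists_mem_ne_zero_of_ne_bot hker
  have hfx : v ⬝ᵥ x = 0 ∧ v' ⬝ᵥ x = 0 := by
    have := (LinearMap.mem_ker).mp hx
    exact ⟨congrArg Prod.fst this, congrArg Prod.snd this⟩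
  have hxx : x = 0 := by
    have := congrArg (fun M => M *ᵥ x) h
    simp only [Matrix.add_mulVec, Matrix.one_mulVec, vecMulVec_mulVec,
      hfx.1, hfx.2, zero_smul, add_zero] at this
    exact this.symm
  exact hx0 hxx

lemma S_to_rankOne {E : Matrix (Fin n) (Fin n) F} (hE0 : E ≠ 0)
    (hS : ∀ P : Matrix (Fin n) (Fin n) F, ∃ c : F, E * P * E = c • E) :
    ∃ u v, E = vecMulVec u v := by
  obtain ⟨i0, j0, hij⟩ := exists_entry_ne hE0
  by_cases hex : ∃ (t : Fin n) (c : F), c ≠ 0 ∧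
      E * Matrix.single j0 t (1 : F) * E = c • E
  · obtain ⟨t, c, hc, heq⟩ := hex
    rw [mul_std_mul] at heq
    refine ⟨c⁻¹ • (fun i => E i j0), (fun j => E t j), ?_⟩
    ext i j
    have := congrFun (congrFun heq i) j
    rw [vecMulVec_apply] at this
    simp only [Matrix.smul_apply, smul_eq_mul] at this
    rw [vecMulVec_apply]
    simp only [Pi.smul_apply, smul_eq_mul]
    rw [mul_assoc, this, inv_mul_cancel_left₀ hc]
  · push_neg at hex
    exfalso
    have hz : ∀ t : Fin n, E * Matrix.single j0 t (1 : F) * E = 0 := by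
      intro t
      obtain ⟨c, hc⟩ := hS (Matrix.single j0 t (1 : F))
      rcases eq_or_ne c 0 with h0 | h0
      · rw [hc, h0, zero_smul]
      · exact absurd hc (hex t c h0)
    have : ∀ t j, E t j = 0 := by
      intro t j
      have := congrFun (congrFun ((mul_std_mul E E j0 t).symm.trans (hz t)) i0) j
      rw [vecMulVec_apply] at this
      simp only [Matrix.zero_apply] at this
      rcases mul_eq_zero.mp this with h | h
      · exact absurd h hij
      · exact h
    exact hE0 (by ext i j; simp [this i j])

lemma exists_left_factor (A B : Matrix (Fin n) (Fin n) F)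
    (h : ∀ x : Fin n → F, B *ᵥ x = 0 → A *ᵥ x = 0) :
    ∃ C : Matrix (Fin n) (Fin n) F, C * B = A := by
  classical
  set β := B.mulVecLin with hβ
  set α := A.mulVecLin with hα
  have hle : LinearMap.ker β ≤ LinearMap.ker α := by
    intro x hx
    rw [LinearMap.mem_ker] at hx ⊢
    exact h x hx
  let φ : ((Fin n → F) ⧸ LinearMap.ker β) →ₗ[F] (Fin n → F) :=
    (LinearMap.ker β).liftQ α hle
  let g0 : LinearMap.range β →ₗ[F] (Fin n → F) :=
    φ ∘ₗ (β.quotKerEquivRange.symm).toLinearMap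
  obtain ⟨g, hg⟩ := g0.exists_extend
  refine ⟨LinearMap.toMatrix' g, ?_⟩
  have key : ∀ x : Fin n → F, (LinearMap.toMatrix' g * B) *ᵥ x = A *ᵥ x := by
    intro x
    rw [← Matrix.mulVec_mulVec]
    have h1 : (LinearMap.toMatrix' g) *ᵥ (B *ᵥ x) = g (B *ᵥ x) := by
      rw [← Matrix.toLin'_apply, Matrix.toLin'_toMatrix']
    rw [h1]
    have hmem : B *ᵥ x ∈ LinearMap.range β := ⟨x, rfl⟩
    have h2 : g (B *ᵥ x) = g ((LinearMap.range β).subtype ⟨B *ᵥ x, hmem⟩) := rfl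
    rw [h2, ← LinearMap.comp_apply, hg]
    show φ (β.quotKerEquivRange.symm ⟨B *ᵥ x, hmem⟩) = A *ᵥ x
    have h3 : β.quotKerEquivRange.symm ⟨B *ᵥ x, hmem⟩ = (LinearMap.ker β).mkQ x :=
      β.quotKerEquivRange_symm_apply_image x hmem
    rw [h3]
    show ((LinearMap.ker β).liftQ α hle) ((LinearMap.ker β).mkQ x) = A *ᵥ x
    rw [Submodule.mkQ_apply, Submodule.liftQ_apply]
    rfl
  apply Matrix.ext
  intro i j
  have := congrFun (key (Pi.single j 1)) i
  rwa [Matrix.mulVec_single_one, Matrix.mulVec_single_one] at this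


lemma case_czero_bad (hn : 3 ≤ n) (E N : Matrix (Fin n) (Fin n) F)
    (hE : E*E = E) (hE0 : E ≠ 0) (hE1 : E ≠ 1)
    (hN0 : N ≠ 0) (hN2 : N*N = 0) (hEN : E*N = 0) (hNE : N*E = N) :
    ∃ X : Matrix (Fin n) (Fin n) F,
      (∀ d : F, X ≠ d • 1) ∧ X*E = E*X ∧ X*N = N*X := by
  have h1E : ((1:Matrix (Fin n) (Fin n) F)-E)*E = 0 := by
    rw [sub_mul, one_mul, hE, sub_self]
  have hE1E : E*((1:Matrix (Fin n) (Fin n) F)-E) = 0 := by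
    rw [mul_sub, mul_one, hE, sub_self]
  have hN1E : N*((1:Matrix (Fin n) (Fin n) F)-E) = 0 := by
    rw [mul_sub, mul_one, hNE, sub_self]
  have h1EN : ((1:Matrix (Fin n) (Fin n) F)-E)*N = N := by
    rw [sub_mul, one_mul, hEN, sub_zero]
  have h1Ene : (1:Matrix (Fin n) (Fin n) F) - E ≠ 0 := sub_ne_zero.mpr (Ne.symm hE1)
  by_cases ha : ∃ P : Matrix (Fin n) (Fin n) F, N*P*E = 0 ∧ E*P*E ≠ 0
  · obtain ⟨P, hP1, hP2⟩ := ha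
    refine ⟨E*P*E, ?_, ?_, ?_⟩
    · intro d hX
      have hXE : (E*P*E)*E = E*P*E := by rw [mul_assoc, hE]
      rw [hX, smul_mul_assoc, one_mul] at hXE
      have hd0 : d • ((1:Matrix (Fin n) (Fin n) F) - E) = 0 := by
        rw [smul_sub, hXE, sub_self]
      rcases smul_eq_zero.mp hd0 with h | h
      · rw [h, zero_smul] at hX; exact hP2 hX
      · exact h1Ene h
    · rw [mul_assoc, hE, ← mul_assoc, ← mul_assoc, hE]
    · rw [mul_assoc, hEN, mul_zero, ← mul_assoc, ← mul_assoc, hNE, hP1]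
  push_neg at ha
  by_cases hb : ∃ P : Matrix (Fin n) (Fin n) F, (1-E)*P*N = 0 ∧ (1-E)*P*(1-E) ≠ 0
  · obtain ⟨P, hP1, hP2⟩ := hb
    refine ⟨(1-E)*P*(1-E), ?_, ?_, ?_⟩
    · intro d hX
      have hXE : E*((1-E)*P*(1-E)) = 0 := by
        rw [← mul_assoc, ← mul_assoc, hE1E, zero_mul, zero_mul]
      rw [hX, mul_smul_comm, mul_one] at hXE
      rcases smul_eq_zero.mp hXE with h | h
      · rw [h, zero_smul] at hX; exact hP2 hX
      · exact hE0 h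
    · rw [mul_assoc, h1E, mul_zero, ← mul_assoc, ← mul_assoc, hE1E, zero_mul, zero_mul]
    · rw [mul_assoc, h1EN, hP1, ← mul_assoc, ← mul_assoc, hN1E, zero_mul, zero_mul]
  push_neg at hb
  have hkerN : ∀ x : Fin n → F, N *ᵥ x = 0 → E *ᵥ x = 0 := by
    intro x hx
    by_contra hEx
    obtain ⟨t, j, htj⟩ := exists_entry_ne hE0
    have hNP : N * (vecMulVec x (Pi.single t 1)) * E = 0 := by
      rw [mul_vecMulVec, hx]
      ext i k
      simp [vecMulVec_apply, Matrix.mul_apply]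
    have hP := ha (vecMulVec x (Pi.single t 1)) hNP
    rw [mul_vecMulVec, vecMulVec_mul] at hP
    have hex : ∃ i, (E *ᵥ x) i ≠ 0 := by
      by_contra h; push_neg at h; exact hEx (funext fun i => h i)
    obtain ⟨i, hi⟩ := hex
    have := congrFun (congrFun hP i) j
    rw [vecMulVec_apply] at this
    simp only [Matrix.zero_apply] at this
    rcases mul_eq_zero.mp this with h | h
    · exact hi h
    · simp only [Matrix.single_vecMul, one_mul] at h
      exact htj (by simpa using h)
  have hkerNT : ∀ v : Fin n → F, v ᵥ* N = 0 → v ᵥ* (1-E) = 0 := by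
    intro v hv
    obtain ⟨i, j, hij⟩ := exists_entry_ne h1Ene
    have hu : (((1:Matrix (Fin n) (Fin n) F)-E) *ᵥ Pi.single j 1) i ≠ 0 := by
      rw [Matrix.mulVec_single]
      simpa using hij
    have hbP : (1-E) * (vecMulVec (Pi.single j 1) v) * N = 0 := by
      rw [mul_vecMulVec, vecMulVec_mul, hv]
      ext a b
      simp [vecMulVec_apply]
    have hP := hb (vecMulVec (Pi.single j 1) v) hbP
    rw [mul_vecMulVec, vecMulVec_mul] at hP
    funext k
    have := congrFun (congrFun hP i) k
    rw [vecMulVec_apply] at this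
    simp only [Matrix.zero_apply] at this
    rcases mul_eq_zero.mp this with h | h
    · exact absurd h hu
    · simpa using h
  obtain ⟨G1, hG1⟩ := exists_left_factor E N hkerN
  have hkerT : ∀ x : Fin n → F, Nᵀ *ᵥ x = 0 → ((1:Matrix (Fin n) (Fin n) F)-E)ᵀ *ᵥ x = 0 := by
    intro x hx
    rw [Matrix.mulVec_transpose] at hx ⊢
    exact hkerNT x hx
  obtain ⟨G2t, hG2t⟩ := exists_left_factor ((1:Matrix (Fin n) (Fin n) F)-E)ᵀ Nᵀ hkerT
  have hNG2 : N * G2tᵀ = 1 - E := by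
    have := congrArg Matrix.transpose hG2t
    rwa [Matrix.transpose_mul, Matrix.transpose_transpose, Matrix.transpose_transpose] at this
  set G2 : Matrix (Fin n) (Fin n) F := G2tᵀ with hG2def
  set G : Matrix (Fin n) (Fin n) F := E*G1*N*G2 with hGdef
  have hGN : G*N = E := by
    calc G*N = (E*G1)*((N*G2)*N) := by
          rw [hGdef]; rw [mul_assoc (E*G1) N G2, mul_assoc, mul_assoc]
    _ = (E*G1)*N := by rw [hNG2, h1EN]
    _ = E*(G1*N) := by rw [mul_assoc]
    _ = E := by rw [hG1, hE]
  have hNG : N*G = 1-E := by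
    rw [hGdef]
    simp only [← mul_assoc]
    rw [hNE, mul_assoc N G1 N, hG1, hNE, hNG2]
  have hEG : E*G = G := by
    rw [hGdef, ← mul_assoc, ← mul_assoc, ← mul_assoc, hE]
  have hGE : G*E = 0 := by
    calc G*E = (E*G1)*((N*G2)*E) := by
          rw [hGdef]; rw [mul_assoc (E*G1) N G2, mul_assoc]
    _ = 0 := by rw [hNG2, h1E, mul_zero]
  by_cases hSE : ∀ P : Matrix (Fin n) (Fin n) F, ∃ d : F, E*P*E = d • E
  · by_cases hSE' : ∀ P : Matrix (Fin n) (Fin n) F, ∃ d : F, (1-E)*P*(1-E) = d • (1-E)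
    · exfalso
      obtain ⟨u, v, huv⟩ := S_to_rankOne hE0 hSE
      obtain ⟨u', v', huv'⟩ := S_to_rankOne h1Ene hSE'
      refine not_sum_rankOne hn u v u' v' ?_
      rw [← huv, ← huv']
      abel
    · push_neg at hSE'
      obtain ⟨P, hP⟩ := hSE'
      have h1E1 : ((1:Matrix (Fin n) (Fin n) F)-E)*(1-E) = 1-E := by
        rw [mul_sub, mul_one, h1E, sub_zero]
      set Q : Matrix (Fin n) (Fin n) F := (1-E)*P*(1-E) with hQdef
      have hQ1r : Q*(1-E) = Q := by rw [hQdef, mul_assoc, h1E1]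
      have hQ1l : (1-E)*Q = Q := by
        rw [hQdef, ← mul_assoc, ← mul_assoc, h1E1]
      have hEQ : E*Q = 0 := by
        rw [hQdef, ← mul_assoc, ← mul_assoc, hE1E, zero_mul, zero_mul]
      have hQE : Q*E = 0 := by rw [hQdef, mul_assoc, h1E, mul_zero]
      have hNQ : N*Q = 0 := by
        rw [hQdef, ← mul_assoc, ← mul_assoc, hN1E, zero_mul, zero_mul]
      have h1EG : ((1:Matrix (Fin n) (Fin n) F)-E)*G = 0 := by
        rw [sub_mul, one_mul, hEG, sub_self]
      refine ⟨Q + G*(Q*N), ?_, ?_, ?_⟩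
      · intro d hX
        have key : (1-E)*(Q + G*(Q*N))*(1-E) = Q := by
          rw [mul_add, add_mul, hQ1l, hQ1r, ← mul_assoc, h1EG, zero_mul, zero_mul,
            add_zero]
        rw [hX, mul_smul_comm, mul_one, smul_mul_assoc, h1E1] at key
        exact hP d key.symm
      · rw [add_mul, mul_add, hQE, hEQ, zero_add, zero_add]
        rw [mul_assoc G (Q*N) E, mul_assoc Q N E, hNE, ← mul_assoc E G (Q*N), hEG]
      · rw [add_mul, mul_add, hNQ, zero_add, mul_assoc G (Q*N) N, mul_assoc Q N N,
          hN2, mul_zero, mul_zero, add_zero, ← mul_assoc N G (Q*N), hNG,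
          ← mul_assoc (1-E) Q N, hQ1l]
  · push_neg at hSE
    obtain ⟨P, hP⟩ := hSE
    set Q : Matrix (Fin n) (Fin n) F := E*P*E with hQdef
    have hEQ : E*Q = Q := by rw [hQdef, ← mul_assoc, ← mul_assoc, hE]
    have hQE : Q*E = Q := by rw [hQdef, mul_assoc, hE]
    have hQN : Q*N = 0 := by rw [hQdef, mul_assoc, hEN, mul_zero]
    have hEX : E*(Q + N*(Q*G)) = Q := by
      rw [mul_add, hEQ, ← mul_assoc, hEN, zero_mul, add_zero]
    refine ⟨Q + N*(Q*G), ?_, ?_, ?_⟩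
    · intro d hX
      have key : E*(Q + N*(Q*G))*E = Q := by rw [hEX, hQE]
      rw [hX, mul_smul_comm, mul_one, smul_mul_assoc, hE] at key
      exact hP d key.symm
    · rw [hEX, add_mul, hQE, mul_assoc, mul_assoc, hGE, mul_zero, mul_zero, add_zero]
    · rw [add_mul, hQN, zero_add, mul_add, mul_assoc N (Q*G) N, mul_assoc Q G N,
        hGN, hQE, ← mul_assoc N N (Q*G), hN2, zero_mul, add_zero]

lemma exists_mid {A B : Matrix (Fin n) (Fin n) F} (hA : A ≠ 0) (hB : B ≠ 0) :
    ∃ G : Matrix (Fin n) (Fin n) F, A * G * B ≠ 0 := by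
  obtain ⟨i, j, hij⟩ := exists_entry_ne hA
  obtain ⟨k, l, hkl⟩ := exists_entry_ne hB
  refine ⟨Matrix.single j k (1 : F), ?_⟩
  rw [mul_std_mul]
  intro h0
  have := congrFun (congrFun h0 i) l
  rw [vecMulVec_apply] at this
  simp only [Matrix.zero_apply] at this
  exact (mul_ne_zero hij hkl) this

lemma case_cne (E N P : Matrix (Fin n) (Fin n) F) (hE : E*E = E) (hN2 : N*N = 0)
    (c : F) (hc0 : c ≠ 0) (hrel : E*N + N*E = N + c • 1)
    (hP : ∀ d : F, E*P*E ≠ d • E) :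
    ∃ X : Matrix (Fin n) (Fin n) F,
      (∀ d : F, X ≠ d • 1) ∧ X*E = E*X ∧ X*N = N*X := by
  have rExx : ∀ X : Matrix (Fin n) (Fin n) F, E*(E*X) = E*X := fun X => by
    rw [← mul_assoc, hE]
  have rNxx : ∀ X : Matrix (Fin n) (Fin n) F, N*(N*X) = 0 := fun X => by
    rw [← mul_assoc, hN2, zero_mul]
  have rENE : E*(N*E) = c•E := by
    have h := congrArg (fun Y => E*Y*E) hrel
    simp only [mul_add, add_mul, mul_assoc, rExx, mul_smul_comm, smul_mul_assoc,
      mul_one, one_mul, hE] at h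
    exact add_left_cancel h
  have rENExx : ∀ X : Matrix (Fin n) (Fin n) F, E*(N*(E*X)) = c•(E*X) := fun X => by
    calc E*(N*(E*X)) = (E*(N*E))*X := by rw [mul_assoc, mul_assoc]
    _ = c•(E*X) := by rw [rENE, smul_mul_assoc]
  have rNEN : N*(E*N) = c•N := by
    have h := congrArg (fun Y => N*Y) hrel
    simp only [mul_add, mul_assoc, rNxx, hN2, mul_smul_comm, mul_one, add_zero,
      zero_add] at h
    exact h
  have rNENxx : ∀ X : Matrix (Fin n) (Fin n) F, N*(E*(N*X)) = c•(N*X) := fun X => by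
    calc N*(E*(N*X)) = (N*(E*N))*X := by rw [mul_assoc, mul_assoc]
    _ = c•(N*X) := by rw [rNEN, smul_mul_assoc]
  have hE1E : E*(1-E) = 0 := by rw [mul_sub, mul_one, hE, sub_self]
  have h1E : (1-E)*E = 0 := by rw [sub_mul, one_mul, hE, sub_self]
  set Q : Matrix (Fin n) (Fin n) F := E*P*E with hQdef
  set B : Matrix (Fin n) (Fin n) F := (1-E)*(N*(Q*N))*(1-E) with hBdef
  have hEB : E*B = 0 := by
    rw [hBdef, ← mul_assoc, ← mul_assoc, hE1E, zero_mul, zero_mul]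
  have hBE : B*E = 0 := by
    rw [hBdef, mul_assoc, h1E, mul_zero]
  have hEQE : E*Q*E = Q := by
    rw [hQdef, ← mul_assoc, ← mul_assoc, hE, mul_assoc, hE]
  have hQE : Q*E = Q := by rw [hQdef, mul_assoc, hE]
  have hEQ : E*Q = Q := by rw [hQdef, ← mul_assoc, ← mul_assoc, hE]
  refine ⟨(c*c) • Q - B, ?_, ?_, ?_⟩
  · intro d hX
    have hEXE : E*((c*c)•Q - B)*E = (c*c)•Q := by
      rw [mul_sub, sub_mul, hEB, zero_mul, sub_zero, mul_smul_comm, hEQ,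
        smul_mul_assoc, hQE]
    have hd : E*((c*c)•Q - B)*E = E*(d•(1:Matrix (Fin n) (Fin n) F))*E := by rw [hX]
    rw [hEXE, mul_smul_comm, mul_one, smul_mul_assoc, hE] at hd
    have hcc : c * c ≠ 0 := mul_ne_zero hc0 hc0
    have : Q = ((c*c)⁻¹ * d) • E := by
      calc Q = (c*c)⁻¹ • ((c*c) • Q) := by
              rw [smul_smul, inv_mul_cancel₀ hcc, one_smul]
      _ = (c*c)⁻¹ • (d • E) := by rw [hd]
      _ = ((c*c)⁻¹ * d) • E := by rw [smul_smul]
    exact hP _ this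
  · rw [sub_mul, mul_sub, smul_mul_assoc, mul_smul_comm, hQE, hEQ, hEB, hBE]
  · rw [sub_mul, mul_sub, smul_mul_assoc, mul_smul_comm, hQdef, hBdef]
    simp only [hQdef, sub_mul, mul_sub, one_mul, mul_one, mul_assoc, smul_mul_assoc,
      mul_smul_comm, rExx, rNxx, rENE, rENExx, rNEN, rNENxx, hE, hN2, mul_zero,
      zero_mul, smul_zero, sub_zero, zero_sub, smul_smul]
    module

end CommGraphAux

open CommGraphAux

/-- A nontrivial idempotent and a nonzero square-zero matrix are at distance at most 2
in the commuting graph. -/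
theorem edist_le_two_of_idempotent_squareZero
    (F : Type*) [Field F] (n : ℕ) (hn : 3 ≤ n)
    (E N : Matrix (Fin n) (Fin n) F)
    (hE : E * E = E) (hE0 : E ≠ 0) (hE1 : E ≠ 1)
    (hN : N ≠ 0) (hNsq : N ^ 2 = 0)
    (h₁ : E.IsNoncentral) (h₂ : N.IsNoncentral) :
    (commutingGraph F n).edist ⟨E, h₁⟩ ⟨N, h₂⟩ ≤ 2 := by
  classical
  have hN2 : N * N = 0 := by rwa [pow_two] at hNsq
  have hEneN : E ≠ N := by
    intro h
    apply hE0
    calc E = E * E := hE.symm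
    _ = N * N := by rw [h]
    _ = 0 := hN2
  by_cases hcomm : E * N = N * E
  · have hadj : (commutingGraph F n).Adj ⟨E, h₁⟩ ⟨N, h₂⟩ :=
      ⟨fun h => hEneN (congrArg Subtype.val h), hcomm⟩
    have h1 := SimpleGraph.Walk.edist_le
      (SimpleGraph.Walk.cons hadj SimpleGraph.Walk.nil)
    simp only [SimpleGraph.Walk.length_cons, SimpleGraph.Walk.length_nil] at h1
    exact le_trans h1 (by norm_num)
  · have plumb : ∀ X : Matrix (Fin n) (Fin n) F, (∀ d : F, X ≠ d • 1) →
        X*E = E*X → X*N = N*X →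
        (commutingGraph F n).edist ⟨E, h₁⟩ ⟨N, h₂⟩ ≤ 2 := by
      intro X hXc hXE hXN
      have hXnc : X.IsNoncentral := hXc
      have hadj1 : (commutingGraph F n).Adj ⟨E, h₁⟩ ⟨X, hXnc⟩ := by
        refine ⟨?_, hXE.symm⟩
        intro h
        have hEX : E = X := congrArg Subtype.val h
        apply hcomm
        rw [hEX]
        exact hXN
      have hadj2 : (commutingGraph F n).Adj ⟨X, hXnc⟩ ⟨N, h₂⟩ := by
        refine ⟨?_, hXN⟩
        intro h
        have hXN' : X = N := congrArg Subtype.val h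
        apply hcomm
        rw [← hXN']
        exact hXE.symm
      have hw := SimpleGraph.Walk.edist_le
        (SimpleGraph.Walk.cons hadj1 (SimpleGraph.Walk.cons hadj2 SimpleGraph.Walk.nil))
      simpa using hw
    have hM0E : (E*N + N*E - N)*E = E*(E*N + N*E - N) := by
      rw [sub_mul, mul_sub, add_mul, mul_add, mul_assoc N E E, hE,
        ← mul_assoc E E N, hE, mul_assoc E N E]
      abel
    have hM0N : (E*N + N*E - N)*N = N*(E*N + N*E - N) := by
      rw [sub_mul, mul_sub, add_mul, mul_add, mul_assoc E N N, hN2, mul_zero,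
        ← mul_assoc N N E, hN2, zero_mul, mul_assoc N E N]
      abel
    by_cases hM0c : ∀ d : F, E*N + N*E - N ≠ d • 1
    · exact plumb _ hM0c hM0E hM0N
    · push_neg at hM0c
      obtain ⟨c, hc⟩ := hM0c
      have hrel : E*N + N*E = N + c • 1 := by rw [← hc]; abel
      by_cases hc0 : c = 0
      · subst hc0
        rw [zero_smul, add_zero] at hrel
        by_cases hEN0 : E*N = 0
        · have hNE' : N*E = N := by rw [hEN0, zero_add] at hrel; exact hrel
          obtain ⟨X, hXc, hXE, hXN⟩ :=
            case_czero_bad hn E N hE hE0 hE1 hN hN2 hEN0 hNE'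
          exact plumb X hXc hXE hXN
        · by_cases hNE0 : N*E = 0
          · have hEN' : E*N = N := by rw [hNE0, add_zero] at hrel; exact hrel
            have h1E1 : ((1:Matrix (Fin n) (Fin n) F)-E)*(1-E) = 1-E := by
              rw [mul_sub, mul_one, sub_mul, one_mul, hE, sub_self, sub_zero]
            have h10 : (1:Matrix (Fin n) (Fin n) F) - E ≠ 0 :=
              sub_ne_zero.mpr (Ne.symm hE1)
            have h11 : (1:Matrix (Fin n) (Fin n) F) - E ≠ 1 := by
              intro h
              exact hE0 (sub_eq_self.mp h)
            have hEN1 : ((1:Matrix (Fin n) (Fin n) F)-E)*N = 0 := by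
              rw [sub_mul, one_mul, hEN', sub_self]
            have hNE1 : N*((1:Matrix (Fin n) (Fin n) F)-E) = N := by
              rw [mul_sub, mul_one, hNE0, sub_zero]
            obtain ⟨X, hXc, hXE, hXN⟩ :=
              case_czero_bad hn (1-E) N h1E1 h10 h11 hN hN2 hEN1 hNE1
            have hXE' : X*E = E*X := by
              rw [mul_sub, sub_mul, mul_one, one_mul] at hXE
              exact sub_right_inj.mp hXE
            exact plumb X hXc hXE' hXN
          · have hNEN : N*(E*N) = 0 := by
              have hEq : E*N = N - N*E := eq_sub_of_add_eq hrel
              rw [hEq, mul_sub, hN2, ← mul_assoc N N E, hN2, zero_mul, sub_zero]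
            obtain ⟨G, hG⟩ := exists_mid hEN0 hNE0
            refine plumb (E*N*G*(N*E)) ?_ ?_ ?_
            · intro d hX
              have hEX : E*(E*N*G*(N*E)) = E*N*G*(N*E) := by
                simp only [← mul_assoc]
                rw [hE]
              rw [hX, mul_smul_comm, mul_one] at hEX
              have hd0 : d • ((1:Matrix (Fin n) (Fin n) F) - E) = 0 := by
                rw [smul_sub, hEX, sub_self]
              rcases smul_eq_zero.mp hd0 with h | h
              · rw [h, zero_smul] at hX; exact hG hX
              · exact (sub_ne_zero.mpr (Ne.symm hE1)) h
            · have t1 : (E*N*G*(N*E))*E = E*N*G*(N*E) := by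
                rw [mul_assoc (E*N*G) (N*E) E, mul_assoc N E E, hE]
              have t2 : E*(E*N*G*(N*E)) = E*N*G*(N*E) := by
                simp only [← mul_assoc]
                rw [hE]
              rw [t1, t2]
            · have t1 : (E*N*G*(N*E))*N = 0 := by
                rw [mul_assoc (E*N*G) (N*E) N, mul_assoc N E N, hNEN, mul_zero]
              have t2 : N*(E*N*G*(N*E)) = 0 := by
                rw [← mul_assoc N (E*N*G) (N*E), ← mul_assoc N (E*N) G, hNEN,
                  zero_mul, zero_mul]
              rw [t1, t2]
      · by_cases hSE : ∀ P : Matrix (Fin n) (Fin n) F, ∃ d : F, E*P*E = d • E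
        · by_cases hSE' : ∀ P : Matrix (Fin n) (Fin n) F, ∃ d : F,
              (1-E)*P*(1-E) = d • (1-E)
          · exfalso
            obtain ⟨u, v, huv⟩ := S_to_rankOne hE0 hSE
            obtain ⟨u', v', huv'⟩ :=
              S_to_rankOne (sub_ne_zero.mpr (Ne.symm hE1)) hSE'
            exact not_sum_rankOne hn u v u' v' (by rw [← huv, ← huv']; abel)
          · push_neg at hSE'
            obtain ⟨P, hP⟩ := hSE'
            have h1E1 : ((1:Matrix (Fin n) (Fin n) F)-E)*(1-E) = 1-E := by
              rw [mul_sub, mul_one, sub_mul, one_mul, hE, sub_self, sub_zero]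
            have hc1 : c • (1:Matrix (Fin n) (Fin n) F) = E*N + N*E - N := by
              rw [hrel]; abel
            have hrel' : (1-E)*N + N*(1-E) = N + (-c) • 1 := by
              rw [sub_mul, one_mul, mul_sub, mul_one, neg_smul, hc1]
              abel
            obtain ⟨X, hXc, hXE, hXN⟩ :=
              case_cne (1-E) N P h1E1 hN2 (-c) (neg_ne_zero.mpr hc0) hrel' hP
            have hXE' : X*E = E*X := by
              rw [mul_sub, sub_mul, mul_one, one_mul] at hXE
              exact sub_right_inj.mp hXE
            exact plumb X hXc hXE' hXN
        · push_neg at hSE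
          obtain ⟨P, hP⟩ := hSE
          obtain ⟨X, hXc, hXE, hXN⟩ := case_cne E N P hE hN2 c hc0 hrel hP
          exact plumb X hXc hXE hXN
end
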